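/- arXiv:2204.08243 — 8 statements merged into one kernel-verified Lean document; each statement's English description precedes it below -/
import Mathlib

section
/- Let a>0 and b,c ∈ ℝ, and let φ(τ) = τ^a (log τ)^b (log log τ)^c on (e, ∞). Suppose L ∈ (e, ∞) is such that φ is strictly increasing on (L, ∞), and let φ⁻¹ : (φ(L), ∞) → (L, ∞) denote its inverse. Then φ⁻¹(τ) ≍ τ^{1/a} (log τ)^{-b/a} (log log τ)^{-c/a} as τ → ∞, i.e. there exist C ≥ 1 and M > 0 such that C⁻¹ τ^{1/a} (log τ)^{-b/a} (log log τ)^{-c/a} ≤ φ⁻¹(τ) ≤ C τ^{1/a} (log τ)^{-b/a} (log log τ)^{-c/a} for all τ ≥ M. -/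
open Filter Real Topology

private lemma logdiv : Tendsto (fun x : ℝ => Real.log x / x) atTop (nhds 0) :=
  Real.isLittleO_log_id_atTop.tendsto_div_nhds_zero

private lemma loglogdiv : Tendsto (fun x : ℝ => Real.log (Real.log x) / x) atTop (nhds 0) := by
  have h : ∀ᶠ x : ℝ in atTop,
      (Real.log (Real.log x) / Real.log x) * (Real.log x / x) = Real.log (Real.log x) / x := by
    filter_upwards [Real.tendsto_log_atTop.eventually_gt_atTop 0] with x hx
    field_simp
  have h2 := ((logdiv.comp Real.tendsto_log_atTop).mul logdiv).congr' h
  simpa using h2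

private lemma ratio (a b c K : ℝ) (ha : 0 < a) (hK : 0 < K) :
    Tendsto (fun τ => K * (τ ^ (1/a) * Real.log τ ^ (-b/a) * Real.log (Real.log τ) ^ (-c/a)))
      atTop atTop ∧
    Tendsto (fun τ =>
      ((K * (τ ^ (1/a) * Real.log τ ^ (-b/a) * Real.log (Real.log τ) ^ (-c/a))) ^ a *
        Real.log (K * (τ ^ (1/a) * Real.log τ ^ (-b/a) * Real.log (Real.log τ) ^ (-c/a))) ^ b *
        Real.log (Real.log (K * (τ ^ (1/a) * Real.log τ ^ (-b/a) *
          Real.log (Real.log τ) ^ (-c/a)))) ^ c) / τ)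
      atTop (nhds (K ^ a * (1/a) ^ b)) := by
  set g : ℝ → ℝ := fun τ => τ ^ (1/a) * Real.log τ ^ (-b/a) * Real.log (Real.log τ) ^ (-c/a)
    with hgdef
  set E : ℝ → ℝ := fun τ => Real.log K + (1/a) * Real.log τ + (-b/a) * Real.log (Real.log τ)
      + (-c/a) * Real.log (Real.log (Real.log τ)) with hEdef
  have hlogtop : Tendsto Real.log atTop atTop := Real.tendsto_log_atTop
  have hloglogtop : Tendsto (fun τ : ℝ => Real.log (Real.log τ)) atTop atTop :=
    hlogtop.comp hlogtop
  have hbase : ∀ᶠ τ : ℝ in atTop, 0 < τ ∧ 0 < Real.log τ ∧ 0 < Real.log (Real.log τ) := by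
    filter_upwards [eventually_gt_atTop 0, hlogtop.eventually_gt_atTop 0,
      hloglogtop.eventually_gt_atTop 0] with τ h1 h2 h3
    exact ⟨h1, h2, h3⟩
  -- K * g τ = exp (E τ)
  have hEeq : (fun τ => K * g τ) =ᶠ[atTop] (fun τ => Real.exp (E τ)) := by
    filter_upwards [hbase] with τ ⟨hτ, hlog, hloglog⟩
    rw [hgdef, hEdef]
    simp only
    rw [Real.rpow_def_of_pos hτ, Real.rpow_def_of_pos hlog, Real.rpow_def_of_pos hloglog]
    conv_lhs => rw [← Real.exp_log hK]
    rw [← Real.exp_add, ← Real.exp_add, ← Real.exp_add]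
    congr 1
    ring
  have hEdiv : Tendsto (fun τ => E τ / Real.log τ) atTop (nhds (1/a)) := by
    have h0 : Tendsto (fun τ : ℝ => Real.log K / Real.log τ) atTop (nhds 0) :=
      tendsto_const_nhds.div_atTop hlogtop
    have h1 : Tendsto (fun τ : ℝ => Real.log (Real.log τ) / Real.log τ) atTop (nhds 0) :=
      logdiv.comp hlogtop
    have h2 : Tendsto (fun τ : ℝ => Real.log (Real.log (Real.log τ)) / Real.log τ) atTop
        (nhds 0) := loglogdiv.comp hlogtop
    have hsum : Tendsto (fun τ : ℝ =>
        Real.log K / Real.log τ + (1/a) + (-b/a) * (Real.log (Real.log τ) / Real.log τ)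
          + (-c/a) * (Real.log (Real.log (Real.log τ)) / Real.log τ)) atTop
        (nhds (0 + (1/a) + (-b/a) * 0 + (-c/a) * 0)) :=
      ((h0.add tendsto_const_nhds).add (tendsto_const_nhds.mul h1)).add
        (tendsto_const_nhds.mul h2)
    have heq : ∀ᶠ τ : ℝ in atTop,
        (Real.log K / Real.log τ + (1/a) + (-b/a) * (Real.log (Real.log τ) / Real.log τ)
          + (-c/a) * (Real.log (Real.log (Real.log τ)) / Real.log τ)) = E τ / Real.log τ := by
      filter_upwards [hlogtop.eventually_gt_atTop 0] with τ hlog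
      rw [hEdef]
      field_simp
    have := hsum.congr' heq
    simpa using this
  have hEtop : Tendsto E atTop atTop := by
    have hmul := hEdiv.pos_mul_atTop (by positivity) hlogtop
    refine hmul.congr' ?_
    filter_upwards [hlogtop.eventually_gt_atTop 0] with τ hlog
    field_simp
  have hKgtop : Tendsto (fun τ => K * g τ) atTop atTop :=
    (Real.tendsto_exp_atTop.comp hEtop).congr' hEeq.symm
  refine ⟨hKgtop, ?_⟩
  have hlogKg : (fun τ => Real.log (K * g τ)) =ᶠ[atTop] E := by
    filter_upwards [hEeq] with τ h
    rw [h, Real.log_exp]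
  have hlogKgdiv : Tendsto (fun τ => Real.log (K * g τ) / Real.log τ) atTop (nhds (1/a)) := by
    refine hEdiv.congr' ?_
    filter_upwards [hlogKg] with τ h
    rw [h]
  have hlogKgtop : Tendsto (fun τ => Real.log (K * g τ)) atTop atTop :=
    hEtop.congr' hlogKg.symm
  have hloglogKgtop : Tendsto (fun τ => Real.log (Real.log (K * g τ))) atTop atTop :=
    hlogtop.comp hlogKgtop
  have hratio_pos : ∀ᶠ τ : ℝ in atTop, 0 < Real.log (K * g τ) / Real.log τ :=
    hlogKgdiv.eventually (eventually_gt_nhds (by positivity))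
  have hloglogKgdiv : Tendsto (fun τ => Real.log (Real.log (K * g τ)) / Real.log (Real.log τ))
      atTop (nhds 1) := by
    have hr : Tendsto (fun τ => Real.log (Real.log (K * g τ) / Real.log τ)) atTop
        (nhds (Real.log (1/a))) := hlogKgdiv.log (by positivity)
    have hsum := (hr.div_atTop hloglogtop).add (tendsto_const_nhds (x := (1:ℝ)))
    have heq : ∀ᶠ τ : ℝ in atTop,
        Real.log (Real.log (K * g τ) / Real.log τ) / Real.log (Real.log τ) + 1
          = Real.log (Real.log (K * g τ)) / Real.log (Real.log τ) := by
      filter_upwards [hlogtop.eventually_gt_atTop 0, hloglogtop.eventually_gt_atTop 0,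
        hratio_pos] with τ hlog hloglog hrpos
      have hKglog : Real.log (K * g τ) = (Real.log (K * g τ) / Real.log τ) * Real.log τ := by
        field_simp
      rw [hKglog, Real.log_mul (ne_of_gt hrpos) (ne_of_gt hlog)]
      rw [← hKglog]
      field_simp
    have := hsum.congr' heq
    simpa using this
  -- the main identity
  have hident : ∀ᶠ τ : ℝ in atTop,
      K ^ a * (Real.log (K * g τ) / Real.log τ) ^ b
        * (Real.log (Real.log (K * g τ)) / Real.log (Real.log τ)) ^ c
      = ((K * g τ) ^ a * Real.log (K * g τ) ^ b * Real.log (Real.log (K * g τ)) ^ c) / τ := by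
    filter_upwards [hbase, hlogKgtop.eventually_gt_atTop 0,
      hloglogKgtop.eventually_gt_atTop 0] with τ ⟨hτ, hlog, hloglog⟩ hA hB
    have hgpos : 0 < g τ := by
      rw [hgdef]; positivity
    have hKg_pow : (K * g τ) ^ a
        = K ^ a * (τ * (Real.log τ ^ b)⁻¹ * (Real.log (Real.log τ) ^ c)⁻¹) := by
      rw [hgdef]
      simp only
      rw [Real.mul_rpow hK.le (by positivity),
        Real.mul_rpow (by positivity) (by positivity),
        Real.mul_rpow (by positivity) (by positivity),
        ← Real.rpow_mul hτ.le, ← Real.rpow_mul hlog.le, ← Real.rpow_mul hloglog.le]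
      have e1 : 1/a*a = 1 := by field_simp
      have e2 : -b/a*a = -b := by field_simp
      have e3 : -c/a*a = -c := by field_simp
      rw [e1, e2, e3, Real.rpow_one, Real.rpow_neg hlog.le, Real.rpow_neg hloglog.le]
    have d1 : (Real.log (K * g τ) / Real.log τ) ^ b
        = Real.log (K * g τ) ^ b * (Real.log τ ^ b)⁻¹ := by
      rw [div_eq_mul_inv, Real.mul_rpow hA.le (by positivity), Real.inv_rpow hlog.le]
    have d2 : (Real.log (Real.log (K * g τ)) / Real.log (Real.log τ)) ^ c
        = Real.log (Real.log (K * g τ)) ^ c * (Real.log (Real.log τ) ^ c)⁻¹ := by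
      rw [div_eq_mul_inv, Real.mul_rpow hB.le (by positivity), Real.inv_rpow hloglog.le]
    rw [d1, d2, hKg_pow, eq_div_iff hτ.ne']
    ring
  have hfin : Tendsto (fun τ => K ^ a * (Real.log (K * g τ) / Real.log τ) ^ b
      * (Real.log (Real.log (K * g τ)) / Real.log (Real.log τ)) ^ c) atTop
      (nhds (K ^ a * (1/a) ^ b * (1:ℝ) ^ c)) :=
    (tendsto_const_nhds.mul (hlogKgdiv.rpow_const (Or.inl (by positivity)))).mul
      (hloglogKgdiv.rpow_const (Or.inl one_ne_zero))
  have hres := hfin.congr' hident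
  simpa [Real.one_rpow, hgdef] using hres

theorem stmt_1 (a b c : ℝ) (ha : 0 < a) (L : ℝ) (hL : Real.exp 1 < L)
    (φ ψ : ℝ → ℝ)
    (hφ : ∀ τ ∈ Set.Ioi L, φ τ = τ ^ a * Real.log τ ^ b * Real.log (Real.log τ) ^ c)
    (hmono : StrictMonoOn φ (Set.Ioi L))
    (hinv₁ : ∀ τ ∈ Set.Ioi L, ψ (φ τ) = τ)
    (hinv₂ : ∀ σ ∈ Set.Ioi (φ L), ψ σ ∈ Set.Ioi L ∧ φ (ψ σ) = σ) :
    ∃ C : ℝ, 1 ≤ C ∧ ∃ M : ℝ, 0 < M ∧ ∀ τ : ℝ, M ≤ τ →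
      C⁻¹ * (τ ^ (1/a) * Real.log τ ^ (-b/a) * Real.log (Real.log τ) ^ (-c/a)) ≤ ψ τ ∧
      ψ τ ≤ C * (τ ^ (1/a) * Real.log τ ^ (-b/a) * Real.log (Real.log τ) ^ (-c/a)) := by
  set g : ℝ → ℝ := fun τ => τ ^ (1/a) * Real.log τ ^ (-b/a) * Real.log (Real.log τ) ^ (-c/a)
    with hgdef
  have hp : (0:ℝ) < a ^ b := Real.rpow_pos_of_pos ha b
  have hq : (0:ℝ) < a ^ (-b) := Real.rpow_pos_of_pos ha (-b)
  have hpq : a ^ b * a ^ (-b) = 1 := by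
    rw [← Real.rpow_add ha]; simp
  set X : ℝ := 2 * (a ^ b + a ^ (-b)) with hX
  have hX1 : 1 ≤ X := by nlinarith
  have hXpos : 0 < X := by linarith
  set K : ℝ := X ^ (1/a) with hKdef
  have hKpos : 0 < K := Real.rpow_pos_of_pos hXpos _
  have hKa : K ^ a = X := by
    rw [hKdef, ← Real.rpow_mul hXpos.le, one_div, inv_mul_cancel₀ ha.ne', Real.rpow_one]
  have hK1 : 1 ≤ K := Real.one_le_rpow hX1 (by positivity)
  have hinva : (1/a : ℝ) ^ b = a ^ (-b) := by
    rw [one_div, Real.inv_rpow ha.le, ← Real.rpow_neg ha.le]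
  have hLplus : 1 < K ^ a * (1/a) ^ b := by
    rw [hKa, hinva, hX]; nlinarith
  have hLminus : (K⁻¹) ^ a * (1/a) ^ b < 1 := by
    rw [Real.inv_rpow hKpos.le, hKa, hinva, hX]
    rw [inv_mul_lt_iff₀ (by positivity)]
    nlinarith
  obtain ⟨hgptop, hrp⟩ := ratio a b c K ha hKpos
  obtain ⟨hgmtop, hrm⟩ := ratio a b c K⁻¹ ha (inv_pos.2 hKpos)
  have ev1 : ∀ᶠ τ : ℝ in atTop, L < K * g τ := hgptop.eventually_gt_atTop L
  have ev2 : ∀ᶠ τ : ℝ in atTop, L < K⁻¹ * g τ := hgmtop.eventually_gt_atTop L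
  have ev3 : ∀ᶠ τ : ℝ in atTop, φ L < τ := eventually_gt_atTop _
  have ev4 : ∀ᶠ τ : ℝ in atTop, (0:ℝ) < τ := eventually_gt_atTop _
  have ev5 : ∀ᶠ τ : ℝ in atTop,
      1 < ((K * g τ) ^ a * Real.log (K * g τ) ^ b * Real.log (Real.log (K * g τ)) ^ c) / τ :=
    hrp.eventually (eventually_gt_nhds hLplus)
  have ev6 : ∀ᶠ τ : ℝ in atTop,
      ((K⁻¹ * g τ) ^ a * Real.log (K⁻¹ * g τ) ^ b * Real.log (Real.log (K⁻¹ * g τ)) ^ c) / τ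
        < 1 := hrm.eventually (eventually_lt_nhds hLminus)
  obtain ⟨M, hM⟩ := (((((ev1.and ev2).and ev3).and ev4).and ev5).and ev6).exists_forall_of_atTop
  refine ⟨K, hK1, max M 1, by positivity, fun τ hτ => ?_⟩
  obtain ⟨⟨⟨⟨⟨h1, h2⟩, h3⟩, h4⟩, h5⟩, h6⟩ := hM τ (le_trans (le_max_left _ _) hτ)
  obtain ⟨hψmem, hψeq⟩ := hinv₂ τ h3
  constructor
  · -- lower bound
    have hφm : φ (K⁻¹ * g τ) < τ := by
      rw [hφ _ h2]
      rw [div_lt_one h4] at h6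
      exact h6
    have : K⁻¹ * g τ < ψ τ := by
      have := (hmono.lt_iff_lt h2 hψmem).mp (by rw [hψeq]; exact hφm)
      exact this
    exact this.le
  · -- upper bound
    have hφp : τ < φ (K * g τ) := by
      rw [hφ _ h1]
      rw [lt_div_iff₀ h4, one_mul] at h5
      exact h5
    have : ψ τ < K * g τ := by
      exact (hmono.lt_iff_lt hψmem h1).mp (by rw [hψeq]; exact hφp)
    exact this.le
end

section
/- Let a>0, b≥0, and c ∈ ℝ. There exists C₁ > 0 such that for all A, B ∈ [2, ∞) with A ≤ B, ∫_A^B τ^{a-b-1} (log τ)^c dτ ≥ C₁ A^a B^{-b} (log A)^c log(B/A). -/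
open Real intervalIntegral MeasureTheory

lemma myCont (p c A B : ℝ) (hA : 2 ≤ A) :
    ContinuousOn (fun τ : ℝ => τ ^ p * Real.log τ ^ c) (Set.Icc A B) := by
  intro τ hτ
  have h2 : (2:ℝ) ≤ τ := le_trans hA hτ.1
  have hτ0 : τ ≠ 0 := by positivity
  have hlog : Real.log τ ≠ 0 := by
    have : (0:ℝ) < Real.log τ := Real.log_pos (by linarith)
    exact ne_of_gt this
  apply ContinuousAt.continuousWithinAt
  exact (Real.continuousAt_rpow_const τ p (Or.inl hτ0)).mul
    ((Real.continuousAt_rpow_const _ c (Or.inl hlog)).comp (Real.continuousAt_log hτ0))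

lemma myInt (p c A B : ℝ) (hA : 2 ≤ A) (hAB : A ≤ B) :
    IntervalIntegrable (fun τ : ℝ => τ ^ p * Real.log τ ^ c) volume A B := by
  apply ContinuousOn.intervalIntegrable
  rw [Set.uIcc_of_le hAB]
  exact myCont p c A B hA

lemma myLower (p c K A B : ℝ) (hA : 2 ≤ A) (hAB : A ≤ B) (hK : 0 ≤ K)
    (hpt : ∀ τ ∈ Set.Icc A B, K * τ⁻¹ ≤ τ ^ p * Real.log τ ^ c) :
    K * Real.log (B / A) ≤ ∫ τ in A..B, τ ^ p * Real.log τ ^ c := by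
  have h0 : ∀ x : ℝ, x ∈ Set.uIcc A B → (fun y : ℝ => y) x ≠ 0 := by
    intro x hx
    rw [Set.uIcc_of_le hAB] at hx
    have : (2:ℝ) ≤ x := le_trans hA hx.1
    positivity
  have hint : IntervalIntegrable (fun τ : ℝ => K * τ⁻¹) volume A B :=
    ((intervalIntegrable_inv h0 continuousOn_id)).const_mul K
  have hmono := intervalIntegral.integral_mono_on hAB hint (myInt p c A B hA hAB) hpt
  calc K * Real.log (B / A) = ∫ τ in A..B, K * τ⁻¹ := by
        rw [intervalIntegral.integral_const_mul, integral_inv (fun h => h0 0 h rfl)]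
      _ ≤ _ := hmono

lemma myPt (a b c : ℝ) (ha : 0 < a) (hb : 0 ≤ b) (A B τ : ℝ) (hA : 2 ≤ A)
    (hτ : τ ∈ Set.Icc A B) (D : ℝ) (hD0 : 0 ≤ D) (hD : D ≤ Real.log τ ^ c) :
    (A ^ a * B ^ (-b) * D) * τ⁻¹ ≤ τ ^ (a - b - 1) * Real.log τ ^ c := by
  have hτ0 : (0:ℝ) < τ := by have := hτ.1; linarith
  have hsplit : τ ^ (a - b - 1) = τ ^ a * τ ^ (-b) * τ⁻¹ := by
    rw [← Real.rpow_neg_one τ, ← Real.rpow_add hτ0, ← Real.rpow_add hτ0]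
    ring_nf
  rw [hsplit, show τ ^ a * τ ^ (-b) * τ⁻¹ * Real.log τ ^ c
      = τ ^ a * τ ^ (-b) * Real.log τ ^ c * τ⁻¹ by ring]
  have h1 : A ^ a ≤ τ ^ a := Real.rpow_le_rpow (by linarith) hτ.1 ha.le
  have h2 : B ^ (-b) ≤ τ ^ (-b) :=
    Real.rpow_le_rpow_of_nonpos hτ0 hτ.2 (neg_nonpos.mpr hb)
  have hA0 : (0:ℝ) ≤ A := by linarith
  have hB0 : (0:ℝ) ≤ B := le_trans (by linarith [hτ.1] : (0:ℝ) ≤ τ) hτ.2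
  gcongr

lemma myTrunc (p c A M B : ℝ) (hA : 2 ≤ A) (hAM : A ≤ M) (hMB : M ≤ B) :
    (∫ τ in M..B, τ ^ p * Real.log τ ^ c) ≤ ∫ τ in A..B, τ ^ p * Real.log τ ^ c := by
  have hM2 : 2 ≤ M := le_trans hA hAM
  rw [← intervalIntegral.integral_add_adjacent_intervals
      (myInt p c A M hA hAM) (myInt p c M B hM2 hMB)]
  have h0 : 0 ≤ ∫ τ in A..M, τ ^ p * Real.log τ ^ c := by
    apply intervalIntegral.integral_nonneg hAM
    intro u hu
    have h2u : (2:ℝ) ≤ u := le_trans hA hu.1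
    have h1 : 0 ≤ Real.log u := Real.log_nonneg (by linarith)
    positivity
  linarith

theorem stmt_2 (a b c : ℝ) (ha : 0 < a) (hb : 0 ≤ b) :
    ∃ C₁ : ℝ, 0 < C₁ ∧ ∀ A B : ℝ, 2 ≤ A → A ≤ B →
      C₁ * (A ^ a * B ^ (-b) * Real.log A ^ c * Real.log (B / A)) ≤
        ∫ τ in A..B, τ ^ (a - b - 1) * Real.log τ ^ c := by
  rcases le_or_gt 0 c with hc | hc
  · -- case c ≥ 0
    refine ⟨1, one_pos, fun A B hA hAB => ?_⟩
    rw [one_mul]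
    have hA1 : (1:ℝ) < A := by linarith
    have hA0 : (0:ℝ) < A := by linarith
    have hB0 : (0:ℝ) < B := by linarith
    have hlogA : 0 < Real.log A := Real.log_pos hA1
    have hK : 0 ≤ A ^ a * B ^ (-b) * Real.log A ^ c :=
      mul_nonneg (mul_nonneg (Real.rpow_nonneg hA0.le a) (Real.rpow_nonneg hB0.le (-b)))
        (Real.rpow_nonneg hlogA.le c)
    apply myLower (a - b - 1) c _ A B hA hAB hK
    intro τ hτ
    have hτ1 : 1 < τ := lt_of_lt_of_le hA1 hτ.1
    have hlogle : Real.log A ≤ Real.log τ := Real.log_le_log hA0 hτ.1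
    exact myPt a b c ha hb A B τ hA hτ _ (Real.rpow_nonneg hlogA.le c)
      (Real.rpow_le_rpow hlogA.le hlogle hc)
  · -- case c < 0
    have hk : (0:ℝ) < -c := by linarith
    set k := -c with hkdef
    have hck : c = -k := by rw [hkdef]; ring
    have hlog2 : 0 < Real.log 2 := Real.log_pos one_lt_two
    have hak : 0 < a / (4 * k) := div_pos ha (by linarith)
    set C₂ : ℝ := 1/4 * (a / (4 * k)) ^ k * Real.log 2 ^ k with hC2def
    have hC2pos : 0 < C₂ :=
      mul_pos (mul_pos (by norm_num) (Real.rpow_pos_of_pos hak k))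
        (Real.rpow_pos_of_pos hlog2 k)
    have h2c : (0:ℝ) < (2:ℝ) ^ c := Real.rpow_pos_of_pos two_pos c
    refine ⟨min ((2:ℝ) ^ c) C₂, lt_min h2c hC2pos, fun A B hA hAB => ?_⟩
    have hA1 : (1:ℝ) < A := by linarith
    have hA0 : (0:ℝ) < A := by linarith
    have hB2 : (2:ℝ) ≤ B := le_trans hA hAB
    have hB0 : (0:ℝ) < B := by linarith
    have hlogA : 0 < Real.log A := Real.log_pos hA1
    have hlogB : 0 < Real.log B := Real.log_pos (by linarith)
    have hBA : 0 ≤ Real.log (B / A) := Real.log_nonneg ((one_le_div hA0).mpr hAB)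
    have hXnn : 0 ≤ A ^ a * B ^ (-b) * Real.log A ^ c * Real.log (B / A) :=
      mul_nonneg (mul_nonneg (mul_nonneg (Real.rpow_nonneg hA0.le a)
        (Real.rpow_nonneg hB0.le (-b))) (Real.rpow_nonneg hlogA.le c)) hBA
    rcases le_total B (A * A) with hcase | hcase
    · -- B ≤ A²
      have hlog2A : Real.log B ≤ 2 * Real.log A := by
        have := Real.log_le_log hB0 hcase
        rwa [Real.log_mul hA0.ne' hA0.ne', ← two_mul] at this
      have hpt : ∀ τ ∈ Set.Icc A B,
          (A ^ a * B ^ (-b) * ((2:ℝ) ^ c * Real.log A ^ c)) * τ⁻¹ ≤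
            τ ^ (a - b - 1) * Real.log τ ^ c := by
        intro τ hτ
        have hτ1 : 1 < τ := lt_of_lt_of_le hA1 hτ.1
        have hlogτ : 0 < Real.log τ := Real.log_pos hτ1
        apply myPt a b c ha hb A B τ hA hτ _
          (mul_nonneg h2c.le (Real.rpow_nonneg hlogA.le c))
        have h1 : Real.log τ ≤ 2 * Real.log A :=
          le_trans (Real.log_le_log (by linarith) hτ.2) hlog2A
        calc (2:ℝ) ^ c * Real.log A ^ c = (2 * Real.log A) ^ c := by
              rw [Real.mul_rpow (by norm_num) hlogA.le]
          _ ≤ Real.log τ ^ c := Real.rpow_le_rpow_of_nonpos hlogτ h1 hc.le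
      have key := myLower (a - b - 1) c (A ^ a * B ^ (-b) * ((2:ℝ) ^ c * Real.log A ^ c))
        A B hA hAB (mul_nonneg (mul_nonneg (Real.rpow_nonneg hA0.le a)
          (Real.rpow_nonneg hB0.le (-b)))
          (mul_nonneg h2c.le (Real.rpow_nonneg hlogA.le c))) hpt
      calc min ((2:ℝ) ^ c) C₂ * (A ^ a * B ^ (-b) * Real.log A ^ c * Real.log (B / A))
          ≤ (2:ℝ) ^ c * (A ^ a * B ^ (-b) * Real.log A ^ c * Real.log (B / A)) :=
            mul_le_mul_of_nonneg_right (min_le_left _ _) hXnn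
        _ = A ^ a * B ^ (-b) * ((2:ℝ) ^ c * Real.log A ^ c) * Real.log (B / A) := by ring
        _ ≤ _ := key
    · -- A² ≤ B
      set M := B ^ ((3:ℝ)/4) with hMdef
      have hB1 : (1:ℝ) < B := by linarith
      have hsqrt : A ≤ B ^ ((1:ℝ)/2) := by
        rw [← Real.sqrt_eq_rpow, Real.le_sqrt hA0.le hB0.le]
        rw [sq]; exact hcase
      have hAM : A ≤ M :=
        le_trans hsqrt (Real.rpow_le_rpow_of_exponent_le hB1.le (by norm_num))
      have hMB : M ≤ B := by
        calc M ≤ B ^ (1:ℝ) := Real.rpow_le_rpow_of_exponent_le hB1.le (by norm_num)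
          _ = B := Real.rpow_one B
      have hM2 : (2:ℝ) ≤ M := le_trans hA hAM
      have hM0 : (0:ℝ) < M := by linarith
      have hlogM : Real.log M = 3/4 * Real.log B := Real.log_rpow hB0 _
      have hBM : Real.log (B / M) = 1/4 * Real.log B := by
        rw [Real.log_div hB0.ne' hM0.ne', hlogM]; ring
      have hpt : ∀ τ ∈ Set.Icc M B,
          (M ^ a * B ^ (-b) * Real.log B ^ c) * τ⁻¹ ≤
            τ ^ (a - b - 1) * Real.log τ ^ c := by
        intro τ hτ
        have hτ1 : 1 < τ := lt_of_lt_of_le (by linarith : (1:ℝ) < M) hτ.1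
        have hlogτ : 0 < Real.log τ := Real.log_pos hτ1
        apply myPt a b c ha hb M B τ hM2 hτ _ (Real.rpow_nonneg hlogB.le c)
        exact Real.rpow_le_rpow_of_nonpos hlogτ (Real.log_le_log (by linarith) hτ.2) hc.le
      have key := myLower (a - b - 1) c (M ^ a * B ^ (-b) * Real.log B ^ c) M B hM2 hMB
        (mul_nonneg (mul_nonneg (Real.rpow_nonneg hM0.le a) (Real.rpow_nonneg hB0.le (-b)))
          (Real.rpow_nonneg hlogB.le c)) hpt
      have trunc := myTrunc (a - b - 1) c A M B hA hAM hMB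
      have harith : min ((2:ℝ) ^ c) C₂ * (A ^ a * B ^ (-b) * Real.log A ^ c * Real.log (B / A))
          ≤ (M ^ a * B ^ (-b) * Real.log B ^ c) * Real.log (B / M) := by
        rw [hBM]
        have hAa : A ^ a ≤ B ^ ((1:ℝ)/2 * a) := by
          rw [Real.rpow_mul hB0.le]
          exact Real.rpow_le_rpow hA0.le hsqrt ha.le
        have hlogBA : Real.log (B / A) ≤ Real.log B := by
          rw [Real.log_div hB0.ne' hA0.ne']; linarith
        have hBb : (0:ℝ) ≤ B ^ (-b) := Real.rpow_nonneg hB0.le _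
        have hlAc : (0:ℝ) ≤ Real.log A ^ c := Real.rpow_nonneg hlogA.le c
        have hX1 : A ^ a * B ^ (-b) * Real.log A ^ c * Real.log (B / A)
            ≤ B ^ ((1:ℝ)/2 * a) * B ^ (-b) * Real.log A ^ c * Real.log B :=
          mul_le_mul (mul_le_mul_of_nonneg_right
              (mul_le_mul_of_nonneg_right hAa hBb) hlAc) hlogBA hBA
            (mul_nonneg (mul_nonneg (Real.rpow_nonneg hB0.le _) hBb) hlAc)
        have hcore : C₂ * (B ^ ((1:ℝ)/2 * a) * Real.log A ^ c)
            ≤ 1/4 * (B ^ ((3:ℝ)/4 * a) * Real.log B ^ c) := by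
          have hlc : Real.log A ^ c ≤ Real.log 2 ^ c :=
            Real.rpow_le_rpow_of_nonpos hlog2 (Real.log_le_log two_pos hA) hc.le
          have step1 : C₂ * (B ^ ((1:ℝ)/2 * a) * Real.log A ^ c)
              ≤ C₂ * (B ^ ((1:ℝ)/2 * a) * Real.log 2 ^ c) := by
            apply mul_le_mul_of_nonneg_left _ hC2pos.le
            exact mul_le_mul_of_nonneg_left hlc (Real.rpow_nonneg hB0.le _)
          refine le_trans step1 ?_
          have hcollapse : C₂ * Real.log 2 ^ c = 1/4 * (a / (4 * k)) ^ k := by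
            rw [hC2def, mul_assoc, ← Real.rpow_add hlog2]
            rw [show k + c = 0 by rw [hck]; ring, Real.rpow_zero, mul_one]
          have hmain : (a / (4 * k)) ^ k * B ^ ((1:ℝ)/2 * a)
              ≤ B ^ ((3:ℝ)/4 * a) * Real.log B ^ c := by
            have hLc : Real.log B ^ c = (Real.log B ^ k)⁻¹ := by
              rw [hck, Real.rpow_neg hlogB.le]
            have hLk : 0 < Real.log B ^ k := Real.rpow_pos_of_pos hlogB k
            rw [hLc, ← div_eq_mul_inv, le_div_iff₀ hLk]
            have hpow : (a / (4 * k)) ^ k * Real.log B ^ k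
                = (a / (4 * k) * Real.log B) ^ k :=
              (Real.mul_rpow hak.le hlogB.le).symm
            have hlogle : a / (4 * k) * Real.log B ≤ B ^ (a / (4 * k)) := by
              have h1 : Real.log (B ^ (a / (4 * k))) = a / (4 * k) * Real.log B :=
                Real.log_rpow hB0 _
              have h2 : Real.log (B ^ (a / (4 * k))) ≤ B ^ (a / (4 * k)) - 1 :=
                Real.log_le_sub_one_of_pos (Real.rpow_pos_of_pos hB0 _)
              linarith
            have h3 : (a / (4 * k) * Real.log B) ^ k ≤ (B ^ (a / (4 * k))) ^ k :=
              Real.rpow_le_rpow (mul_nonneg hak.le hlogB.le) hlogle hk.le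
            have h4 : (B ^ (a / (4 * k))) ^ k = B ^ (a / 4) := by
              rw [← Real.rpow_mul hB0.le]
              congr 1
              field_simp
            calc (a / (4 * k)) ^ k * B ^ ((1:ℝ)/2 * a) * Real.log B ^ k
                = (a / (4 * k)) ^ k * Real.log B ^ k * B ^ ((1:ℝ)/2 * a) := by ring
              _ = (a / (4 * k) * Real.log B) ^ k * B ^ ((1:ℝ)/2 * a) := by rw [hpow]
              _ ≤ B ^ (a / 4) * B ^ ((1:ℝ)/2 * a) :=
                  mul_le_mul_of_nonneg_right (h3.trans h4.le) (Real.rpow_nonneg hB0.le _)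
              _ = B ^ ((3:ℝ)/4 * a) := by
                  rw [← Real.rpow_add hB0]
                  congr 1
                  ring
          calc C₂ * (B ^ ((1:ℝ)/2 * a) * Real.log 2 ^ c)
              = (C₂ * Real.log 2 ^ c) * B ^ ((1:ℝ)/2 * a) := by ring
            _ = 1/4 * ((a / (4 * k)) ^ k * B ^ ((1:ℝ)/2 * a)) := by rw [hcollapse]; ring
            _ ≤ 1/4 * (B ^ ((3:ℝ)/4 * a) * Real.log B ^ c) := by
                apply mul_le_mul_of_nonneg_left hmain (by norm_num)
        have hMa : M ^ a = B ^ ((3:ℝ)/4 * a) := by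
          rw [hMdef, ← Real.rpow_mul hB0.le]
        calc min ((2:ℝ) ^ c) C₂ * (A ^ a * B ^ (-b) * Real.log A ^ c * Real.log (B / A))
            ≤ C₂ * (A ^ a * B ^ (-b) * Real.log A ^ c * Real.log (B / A)) :=
              mul_le_mul_of_nonneg_right (min_le_right _ _) hXnn
          _ ≤ C₂ * (B ^ ((1:ℝ)/2 * a) * B ^ (-b) * Real.log A ^ c * Real.log B) :=
              mul_le_mul_of_nonneg_left hX1 hC2pos.le
          _ = (C₂ * (B ^ ((1:ℝ)/2 * a) * Real.log A ^ c)) * (B ^ (-b) * Real.log B) := by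
              ring
          _ ≤ (1/4 * (B ^ ((3:ℝ)/4 * a) * Real.log B ^ c)) * (B ^ (-b) * Real.log B) := by
              apply mul_le_mul_of_nonneg_right hcore
                (mul_nonneg (Real.rpow_nonneg hB0.le _) hlogB.le)
          _ = M ^ a * B ^ (-b) * Real.log B ^ c * (1/4 * Real.log B) := by
              rw [hMa]; ring
      exact le_trans harith (le_trans key trunc)
end

section
/- Let p>1, d ∈ [1,p), q ∈ ℝ, R ≥ 0, and define f(τ) = 0 for τ ∈ [0,R] and f(τ) = τ^d ∫_R^τ s^{-d} (∫_R^s ξ^{p-2} [log(e+ξ)]^q dξ) ds for τ > R. Then f is convex on [0, ∞). -/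
open Set MeasureTheory intervalIntegral Filter Topology

noncomputable def phiF (p q : ℝ) (ξ : ℝ) : ℝ := ξ ^ (p-2) * Real.log (Real.exp 1 + ξ) ^ q
noncomputable def ggF (p q R : ℝ) (s : ℝ) : ℝ := ∫ ξ in R..s, phiF p q ξ
noncomputable def psiF (p q d R : ℝ) (s : ℝ) : ℝ := s ^ (-d) * ggF p q R s
noncomputable def hhF (p q d R : ℝ) (τ : ℝ) : ℝ := ∫ s in R..τ, psiF p q d R s

/-- bound for the log factor on `[0,T]` -/
noncomputable def MF (q T : ℝ) : ℝ := max 1 (Real.log (Real.exp 1 + T) ^ q)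

namespace Stmt5Aux

variable {p q d R : ℝ}

lemma log_ge_one {ξ : ℝ} (hξ : 0 ≤ ξ) : 1 ≤ Real.log (Real.exp 1 + ξ) := by
  have h := Real.log_le_log (Real.exp_pos 1) (by linarith : Real.exp 1 ≤ Real.exp 1 + ξ)
  rwa [Real.log_exp] at h

lemma L_contAt {ξ : ℝ} (hξ : 0 ≤ ξ) :
    ContinuousAt (fun x : ℝ => Real.log (Real.exp 1 + x) ^ q) ξ := by
  have h1 : (0:ℝ) < Real.exp 1 + ξ := by have := Real.exp_pos 1; linarith
  have h2 : Real.log (Real.exp 1 + ξ) ≠ 0 := by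
    have := log_ge_one hξ; linarith
  exact (((continuous_const.add continuous_id).continuousAt).log h1.ne').rpow_const (Or.inl h2)

lemma L_le {T ξ : ℝ} (hξ : 0 ≤ ξ) (hT : ξ ≤ T) :
    Real.log (Real.exp 1 + ξ) ^ q ≤ MF q T := by
  rcases le_or_gt 0 q with hq | hq
  · refine le_max_of_le_right ?_
    exact Real.rpow_le_rpow (by linarith [log_ge_one hξ])
      (Real.log_le_log (by have := Real.exp_pos 1; linarith) (by linarith)) hq
  · exact le_max_of_le_left (Real.rpow_le_one_of_one_le_of_nonpos (log_ge_one hξ) hq.le)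

lemma MF_pos {T : ℝ} : (0:ℝ) < MF q T := lt_of_lt_of_le one_pos (le_max_left _ _)

lemma phi_nonneg {ξ : ℝ} (hξ : 0 ≤ ξ) : 0 ≤ phiF p q ξ :=
  mul_nonneg (Real.rpow_nonneg hξ _)
    (Real.rpow_nonneg (by linarith [log_ge_one hξ]) _)

lemma phi_contAt {ξ : ℝ} (hξ : 0 < ξ) : ContinuousAt (phiF p q) ξ :=
  (Real.continuousAt_rpow_const _ _ (Or.inl hξ.ne')).mul (L_contAt hξ.le)

lemma phi_contOn : ContinuousOn (phiF p q) (Ioi 0) :=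
  fun x hx => (phi_contAt hx).continuousWithinAt

lemma phi_int (hp : 1 < p) {a b : ℝ} (ha : 0 ≤ a) (hb : 0 ≤ b) :
    IntervalIntegrable (phiF p q) volume a b := by
  refine (intervalIntegrable_rpow' (by linarith : (-1:ℝ) < p - 2)).mul_continuousOn ?_
  intro x hx
  have hx0 : 0 ≤ x := le_trans (le_min ha hb) (by simpa using hx.1)
  exact (L_contAt hx0).continuousWithinAt

lemma phi_le (hp : 1 < p) {T ξ : ℝ} (h0 : 0 ≤ ξ) (hT : ξ ≤ T) :
    phiF p q ξ ≤ ξ ^ (p-2) * MF q T :=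
  mul_le_mul_of_nonneg_left (L_le h0 hT) (Real.rpow_nonneg h0 _)

lemma gg_nonneg (hp : 1 < p) (hR : 0 ≤ R) {s : ℝ} (hs : R ≤ s) : 0 ≤ ggF p q R s :=
  intervalIntegral.integral_nonneg hs (fun ξ hξ => phi_nonneg (hR.trans hξ.1))

lemma gg_mono (hp : 1 < p) (hR : 0 ≤ R) {x y : ℝ} (hx : R ≤ x) (hxy : x ≤ y) :
    ggF p q R x ≤ ggF p q R y := by
  have i1 := phi_int (q := q) hp hR (hR.trans hx)
  have i2 := phi_int (q := q) hp (hR.trans hx) (hR.trans (hx.trans hxy))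
  have hadd := integral_add_adjacent_intervals i1 i2
  have hnn : 0 ≤ ∫ ξ in x..y, phiF p q ξ :=
    intervalIntegral.integral_nonneg hxy (fun ξ hξ => phi_nonneg ((hR.trans hx).trans hξ.1))
  have heq : ggF p q R x + (∫ ξ in x..y, phiF p q ξ) = ggF p q R y := hadd
  linarith

lemma gg_le (hp : 1 < p) (hR : 0 ≤ R) {s T : ℝ} (hs : R ≤ s) (hsT : s ≤ T) :
    ggF p q R s ≤ MF q T / (p-1) * s ^ (p-1) := by
  have hs0 : 0 ≤ s := hR.trans hs
  have key : ggF p q R s ≤ ∫ ξ in R..s, ξ ^ (p-2) * MF q T := by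
    refine intervalIntegral.integral_mono_on hs (phi_int hp hR hs0)
      ((intervalIntegrable_rpow' (by linarith : (-1:ℝ) < p - 2)).mul_const _) ?_
    intro ξ hξ
    exact phi_le hp (hR.trans hξ.1) (hξ.2.trans hsT)
  have hint : ∫ ξ in R..s, ξ ^ (p-2) * MF q T
      = (s ^ (p-1) - R ^ (p-1)) / (p-1) * MF q T := by
    have e : p - 2 + 1 = p - 1 := by ring
    rw [intervalIntegral.integral_mul_const, integral_rpow (Or.inl (by linarith : (-1:ℝ) < p - 2)), e]
  rw [hint] at key
  have hRp : 0 ≤ R ^ (p-1) := Real.rpow_nonneg hR _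
  have hM : 0 < MF q T := MF_pos
  have hp1 : (0:ℝ) < p - 1 := by linarith
  calc ggF p q R s ≤ (s ^ (p-1) - R ^ (p-1)) / (p-1) * MF q T := key
    _ ≤ s ^ (p-1) / (p-1) * MF q T := by
        gcongr
        linarith
    _ = MF q T / (p-1) * s ^ (p-1) := by ring

lemma psi_nonneg (hp : 1 < p) (hR : 0 ≤ R) {s : ℝ} (hs : R ≤ s) : 0 ≤ psiF p q d R s :=
  mul_nonneg (Real.rpow_nonneg (hR.trans hs) _) (gg_nonneg hp hR hs)

lemma psi_le (hp : 1 < p) (hR : 0 ≤ R) {s T : ℝ} (h0 : 0 < s) (hs : R ≤ s) (hsT : s ≤ T) :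
    psiF p q d R s ≤ MF q T / (p-1) * s ^ (p-1-d) := by
  have h1 : psiF p q d R s ≤ s ^ (-d) * (MF q T / (p-1) * s ^ (p-1)) :=
    mul_le_mul_of_nonneg_left (gg_le hp hR hs hsT) (Real.rpow_nonneg h0.le _)
  calc psiF p q d R s ≤ s ^ (-d) * (MF q T / (p-1) * s ^ (p-1)) := h1
    _ = MF q T / (p-1) * s ^ (p-1-d) := by
        rw [show p - 1 - d = -d + (p-1) by ring, Real.rpow_add h0]
        ring

lemma gg_contOn (hp : 1 < p) (hR : 0 ≤ R) {τ : ℝ} (hτ : R ≤ τ) :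
    ContinuousOn (ggF p q R) (Icc R τ) := by
  have hint : IntegrableOn (phiF p q) (uIcc R τ) volume := by
    rw [uIcc_of_le hτ]
    exact (intervalIntegrable_iff_integrableOn_Icc_of_le hτ).mp (phi_int hp hR (hR.trans hτ))
  have := intervalIntegral.continuousOn_primitive_interval hint
  rw [uIcc_of_le hτ] at this
  exact this

lemma psi_int (hp : 1 < p) (hdp : d < p) (hR : 0 ≤ R) {τ : ℝ} (hτ : R ≤ τ) :
    IntervalIntegrable (psiF p q d R) volume R τ := by
  refine IntervalIntegrable.mono_fun
    (f := fun s => MF q τ / (p-1) * s ^ (p-1-d))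
    (((intervalIntegrable_rpow' (by linarith : (-1:ℝ) < p - 1 - d))).const_mul _) ?_ ?_
  · rw [uIoc_of_le hτ]
    refine ContinuousOn.aestronglyMeasurable ?_ measurableSet_Ioc
    intro s hs
    have hs0 : 0 < s := lt_of_le_of_lt hR hs.1
    exact ((Real.continuousAt_rpow_const _ _ (Or.inl hs0.ne')).continuousWithinAt.mul
      (((gg_contOn hp hR hτ).mono Ioc_subset_Icc_self) s hs))
  · rw [uIoc_of_le hτ]
    refine (ae_restrict_iff' measurableSet_Ioc).mpr (ae_of_all _ ?_)
    intro s hs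
    have hs0 : 0 < s := lt_of_le_of_lt hR hs.1
    simp only [Real.norm_eq_abs]
    rw [abs_of_nonneg (psi_nonneg hp hR hs.1.le)]
    exact (psi_le hp hR hs0 hs.1.le hs.2).trans (le_abs_self _)

lemma psi_int' (hp : 1 < p) (hdp : d < p) (hR : 0 ≤ R) {x y : ℝ} (hx : R ≤ x) (hxy : x ≤ y) :
    IntervalIntegrable (psiF p q d R) volume x y :=
  (psi_int hp hdp hR (hx.trans hxy)).mono_set
    (uIcc_subset_uIcc (by rw [uIcc_of_le (hx.trans hxy)]; exact ⟨hx, hxy⟩)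
      (by rw [uIcc_of_le (hx.trans hxy)]; exact ⟨hx.trans hxy, le_refl y⟩))

lemma hh_nonneg (hp : 1 < p) (hdp : d < p) (hR : 0 ≤ R) {τ : ℝ} (hτ : R ≤ τ) :
    0 ≤ hhF p q d R τ :=
  intervalIntegral.integral_nonneg hτ (fun s hs => psi_nonneg hp hR hs.1)

lemma hh_mono (hp : 1 < p) (hdp : d < p) (hR : 0 ≤ R) {x y : ℝ} (hx : R ≤ x) (hxy : x ≤ y) :
    hhF p q d R x ≤ hhF p q d R y := by
  have i1 := psi_int (q := q) hp hdp hR hx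
  have i2 := psi_int' (q := q) hp hdp hR hx hxy
  have hadd := integral_add_adjacent_intervals i1 i2
  have hnn : 0 ≤ ∫ s in x..y, psiF p q d R s :=
    intervalIntegral.integral_nonneg hxy (fun s hs => psi_nonneg hp hR (hx.trans hs.1))
  have heq : hhF p q d R x + (∫ s in x..y, psiF p q d R s) = hhF p q d R y := hadd
  linarith

lemma gg_hasDeriv (hp : 1 < p) (hR : 0 ≤ R) {s : ℝ} (hs : R < s) :
    HasDerivAt (ggF p q R) (phiF p q s) s := by
  have hs0 : 0 < s := lt_of_le_of_lt hR hs
  exact intervalIntegral.integral_hasDerivAt_right (phi_int hp hR hs0.le)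
    (ContinuousOn.stronglyMeasurableAtFilter isOpen_Ioi phi_contOn s hs0)
    (phi_contAt hs0)

lemma psi_contOn (hp : 1 < p) (hR : 0 ≤ R) : ContinuousOn (psiF p q d R) (Ioi R) := by
  intro s hs
  have hs0 : 0 < s := lt_of_le_of_lt hR hs
  exact ((Real.continuousAt_rpow_const _ _ (Or.inl hs0.ne')).mul
    (gg_hasDeriv hp hR hs).continuousAt).continuousWithinAt

lemma hh_hasDeriv (hp : 1 < p) (hdp : d < p) (hR : 0 ≤ R) {τ : ℝ} (hτ : R < τ) :
    HasDerivAt (hhF p q d R) (psiF p q d R τ) τ :=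
  intervalIntegral.integral_hasDerivAt_right (psi_int hp hdp hR hτ.le)
    (ContinuousOn.stronglyMeasurableAtFilter isOpen_Ioi (psi_contOn hp hR) τ hτ)
    ((psi_contOn hp hR τ hτ).continuousAt (Ioi_mem_nhds hτ))

lemma rpow_anti {a b e : ℝ} (ha : 0 < a) (hab : a ≤ b) (he : e ≤ 0) : b ^ e ≤ a ^ e := by
  have hb : 0 < b := lt_of_lt_of_le ha hab
  rw [show e = -(-e) by ring, Real.rpow_neg hb.le, Real.rpow_neg ha.le]
  exact inv_anti₀ (Real.rpow_pos_of_pos ha _) (Real.rpow_le_rpow ha.le hab (by linarith))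

lemma phi_bound_near (hp : 1 < p) (hR0 : 0 < R) {ξ : ℝ} (h1 : R ≤ ξ) (h2 : ξ ≤ R + 1) :
    phiF p q ξ ≤ max (R ^ (p-2)) ((R+1) ^ (p-2)) * MF q (R+1) := by
  have h0 : 0 ≤ ξ := hR0.le.trans h1
  refine le_trans (phi_le hp h0 h2) (mul_le_mul_of_nonneg_right ?_ MF_pos.le)
  rcases le_or_gt 0 (p-2) with h | h
  · exact le_max_of_le_right (Real.rpow_le_rpow h0 h2 h)
  · exact le_max_of_le_left (rpow_anti hR0 h1 h.le)

lemma gg_bound_near (hp : 1 < p) (hR0 : 0 < R) {s : ℝ} (h1 : R ≤ s) (h2 : s ≤ R + 1) :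
    ggF p q R s ≤ max (R ^ (p-2)) ((R+1) ^ (p-2)) * MF q (R+1) * (s - R) := by
  have key : ggF p q R s ≤ ∫ _ in R..s, max (R ^ (p-2)) ((R+1) ^ (p-2)) * MF q (R+1) := by
    refine intervalIntegral.integral_mono_on h1 (phi_int hp hR0.le (hR0.le.trans h1))
      intervalIntegrable_const ?_
    exact fun ξ hξ => phi_bound_near hp hR0 hξ.1 (hξ.2.trans h2)
  rw [intervalIntegral.integral_const, smul_eq_mul] at key
  calc ggF p q R s ≤ (s - R) * (max (R ^ (p-2)) ((R+1) ^ (p-2)) * MF q (R+1)) := key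
    _ = max (R ^ (p-2)) ((R+1) ^ (p-2)) * MF q (R+1) * (s - R) := by ring

lemma hh_bound_near (hp : 1 < p) (hd1 : 1 ≤ d) (hdp : d < p) (hR0 : 0 < R) {x : ℝ}
    (h1 : R ≤ x) (h2 : x ≤ R + 1) :
    hhF p q d R x ≤ (R ^ d)⁻¹ * (max (R ^ (p-2)) ((R+1) ^ (p-2)) * MF q (R+1)) * (x - R)^2 := by
  set B : ℝ := max (R ^ (p-2)) ((R+1) ^ (p-2)) * MF q (R+1) with hB
  have hBnn : 0 ≤ B := mul_nonneg (le_trans (Real.rpow_nonneg hR0.le _) (le_max_left _ _)) MF_pos.le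
  have hKnn : 0 ≤ (R ^ d)⁻¹ := inv_nonneg.mpr (Real.rpow_nonneg hR0.le _)
  have hψ : ∀ s ∈ Icc R x, psiF p q d R s ≤ (R ^ d)⁻¹ * B * (s - R) := by
    intro s hs
    have hs0 : 0 < s := lt_of_lt_of_le hR0 hs.1
    have step1 : psiF p q d R s ≤ s ^ (-d) * (B * (s - R)) :=
      mul_le_mul_of_nonneg_left (gg_bound_near hp hR0 hs.1 (hs.2.trans h2))
        (Real.rpow_nonneg hs0.le _)
    have step2 : s ^ (-d) ≤ (R ^ d)⁻¹ := by
      rw [← Real.rpow_neg hR0.le]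
      exact rpow_anti hR0 hs.1 (by linarith)
    calc psiF p q d R s ≤ s ^ (-d) * (B * (s - R)) := step1
      _ ≤ (R ^ d)⁻¹ * (B * (s - R)) :=
          mul_le_mul_of_nonneg_right step2 (mul_nonneg hBnn (sub_nonneg.mpr hs.1))
      _ = (R ^ d)⁻¹ * B * (s - R) := by ring
  have key : hhF p q d R x ≤ ∫ s in R..x, (R ^ d)⁻¹ * B * (s - R) := by
    refine intervalIntegral.integral_mono_on h1 (psi_int hp hdp hR0.le h1) ?_ hψ
    exact ((continuous_const.mul (continuous_id.sub continuous_const)).intervalIntegrable _ _)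
  have comp : ∫ s in R..x, (R ^ d)⁻¹ * B * (s - R) = (R ^ d)⁻¹ * B * ((x - R)^2 / 2) := by
    rw [intervalIntegral.integral_const_mul]
    have : ∫ s in R..x, (s - R) = ∫ s in R - R..x - R, s := intervalIntegral.integral_comp_sub_right (fun s => s) R
    rw [this, sub_self, integral_id]
    ring
  rw [comp] at key
  nlinarith [mul_nonneg hKnn hBnn, sq_nonneg (x - R)]

lemma hh_bound_zero (hp : 1 < p) (hd1 : 1 ≤ d) (hdp : d < p) {x : ℝ} (h0 : 0 ≤ x) (h1 : x ≤ 1) :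
    hhF p q d 0 x ≤ MF q 1 / (p-1) / (p-d) * x ^ (p-d) := by
  have hpd : (0:ℝ) < p - d := by linarith
  have key : hhF p q d 0 x ≤ ∫ s in (0:ℝ)..x, MF q 1 / (p-1) * s ^ (p-1-d) := by
    refine intervalIntegral.integral_mono_on h0 (psi_int hp hdp le_rfl h0)
      ((intervalIntegrable_rpow' (by linarith : (-1:ℝ) < p - 1 - d)).const_mul _) ?_
    intro s hs
    rcases eq_or_lt_of_le hs.1 with h | h
    · have : psiF p q d 0 s = 0 := by
        rw [psiF, ← h, Real.zero_rpow (by simp; linarith : -d ≠ 0), zero_mul]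
      rw [this]
      exact mul_nonneg (div_nonneg MF_pos.le (by linarith)) (Real.rpow_nonneg (by rw [← h]) _)
    · exact psi_le hp le_rfl h hs.1 (hs.2.trans h1)
  have comp : ∫ s in (0:ℝ)..x, MF q 1 / (p-1) * s ^ (p-1-d)
      = MF q 1 / (p-1) / (p-d) * x ^ (p-d) := by
    have e : p - 1 - d + 1 = p - d := by ring
    rw [intervalIntegral.integral_const_mul,
      integral_rpow (Or.inl (by linarith : (-1:ℝ) < p - 1 - d)), e,
      Real.zero_rpow hpd.ne']
    ring
  rw [comp] at key
  exact key

end Stmt5Aux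

theorem stmt_5 (p d q R : ℝ) (hp : 1 < p) (hd1 : 1 ≤ d) (hdp : d < p) (hR : 0 ≤ R)
    (f : ℝ → ℝ)
    (hf0 : ∀ τ ∈ Set.Icc (0:ℝ) R, f τ = 0)
    (hf : ∀ τ : ℝ, R < τ →
      f τ = τ ^ d * ∫ s in R..τ, s ^ (-d) *
        ∫ ξ in R..s, ξ ^ (p-2) * Real.log (Real.exp 1 + ξ) ^ q) :
    ConvexOn ℝ (Set.Ici 0) f := by
  classical
  have hp1 : (0:ℝ) < p - 1 := by linarith
  have hd0 : (0:ℝ) < d := by linarith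
  set w : ℝ → ℝ := fun τ => d * τ ^ (d-1) * hhF p q d R τ + ggF p q R τ with hw
  have hf' : ∀ τ, R < τ → f τ = τ ^ d * hhF p q d R τ := by
    intro τ hτ; rw [hf τ hτ]; rfl
  have fderiv_gt : ∀ τ, R < τ → HasDerivAt f (w τ) τ := by
    intro τ hτ
    have h0 : 0 < τ := lt_of_le_of_lt hR hτ
    have H1 : HasDerivAt (fun t => t ^ d * hhF p q d R t)
        (d * τ ^ (d-1) * hhF p q d R τ + τ ^ d * psiF p q d R τ) τ :=
      (Real.hasDerivAt_rpow_const (Or.inl h0.ne')).mul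
        (Stmt5Aux.hh_hasDeriv hp hdp hR hτ)
    have e2 : τ ^ d * psiF p q d R τ = ggF p q R τ := by
      rw [show psiF p q d R τ = τ ^ (-d) * ggF p q R τ from rfl, ← mul_assoc,
        ← Real.rpow_add h0, add_neg_cancel, Real.rpow_zero, one_mul]
    have H2 : HasDerivAt (fun t => t ^ d * hhF p q d R t) (w τ) τ := by
      rw [hw]; dsimp only; rw [← e2]; exact H1
    exact H2.congr_of_eventuallyEq
      (Filter.eventuallyEq_of_mem (Ioi_mem_nhds hτ) (fun x hx => hf' x hx))
  have fderiv_lt : ∀ τ, 0 < τ → τ < R → HasDerivAt f 0 τ := fun τ h1 h2 =>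
    (hasDerivAt_const τ (0:ℝ)).congr_of_eventuallyEq
      (Filter.eventuallyEq_of_mem (Ioo_mem_nhds h1 h2) (fun x hx => hf0 x ⟨hx.1.le, hx.2.le⟩))
  have fR : f R = 0 := hf0 R ⟨hR, le_refl R⟩
  have fpos : ∀ x, R < x → 0 ≤ f x := by
    intro x hx
    rw [hf' x hx]
    exact mul_nonneg (Real.rpow_nonneg (hR.trans hx.le) _)
      (Stmt5Aux.hh_nonneg hp hdp hR hx.le)
  have fderiv_R : 0 < R → HasDerivAt f 0 R := by
    intro hR0
    set C1 : ℝ := (R ^ d)⁻¹ * (max (R ^ (p-2)) ((R+1) ^ (p-2)) * MF q (R+1)) with hC1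
    have hC1nn : 0 ≤ C1 :=
      mul_nonneg (inv_nonneg.mpr (Real.rpow_nonneg hR0.le _))
        (mul_nonneg (le_trans (Real.rpow_nonneg hR0.le _) (le_max_left _ _)) Stmt5Aux.MF_pos.le)
    set C : ℝ := (R+1) ^ d * C1 with hC
    have hCnn : 0 ≤ C := mul_nonneg (Real.rpow_nonneg (by linarith) _) hC1nn
    have fbound : ∀ x, R < x → x ≤ R + 1 → f x ≤ C * (x - R)^2 := by
      intro x hx1 hx2
      rw [hf' x hx1]
      have h1 : hhF p q d R x ≤ C1 * (x - R)^2 :=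
        Stmt5Aux.hh_bound_near hp hd1 hdp hR0 hx1.le hx2
      have h2 : x ^ d ≤ (R+1) ^ d := Real.rpow_le_rpow (hR.trans hx1.le) hx2 hd0.le
      calc x ^ d * hhF p q d R x ≤ (R+1)^d * (C1 * (x-R)^2) :=
            mul_le_mul h2 h1 (Stmt5Aux.hh_nonneg hp hdp hR hx1.le)
              (Real.rpow_nonneg (by linarith) _)
        _ = C * (x-R)^2 := by rw [hC]; ring
    rw [hasDerivAt_iff_tendsto_slope, ← nhdsLT_sup_nhdsGT, Filter.tendsto_sup]
    constructor
    · apply Filter.Tendsto.congr' _ tendsto_const_nhds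
      filter_upwards [Ioo_mem_nhdsLT_of_mem (show R ∈ Ioc 0 R from ⟨hR0, le_refl R⟩)] with x hx
      rw [slope_def_field, hf0 x ⟨hx.1.le, hx.2.le⟩, fR]
      simp
    · refine squeeze_zero' ?_ ?_ ?_ (g := fun x => C * (x - R))
      · filter_upwards [Ioo_mem_nhdsGT_of_mem
          (show R ∈ Ico R (R+1) from ⟨le_refl R, by linarith⟩)] with x hx
        rw [slope_def_field, fR, sub_zero]
        exact div_nonneg (fpos x hx.1) (by linarith [hx.1])
      · filter_upwards [Ioo_mem_nhdsGT_of_mem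
          (show R ∈ Ico R (R+1) from ⟨le_refl R, by linarith⟩)] with x hx
        rw [slope_def_field, fR, sub_zero, div_le_iff₀ (by linarith [hx.1] : 0 < x - R)]
        calc f x ≤ C * (x - R)^2 := fbound x hx.1 hx.2.le
          _ = C * (x - R) * (x - R) := by ring
      · have ht : Filter.Tendsto (fun x => C * (x - R)) (nhds R) (nhds (C * (R - R))) :=
          ((continuous_const.mul (continuous_id.sub continuous_const)).tendsto R)
        simpa using ht.mono_left nhdsWithin_le_nhds
  have cont00 : R = 0 → ContinuousWithinAt f (Set.Ici 0) 0 := by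
    intro h0R
    subst h0R
    have f0 : f 0 = 0 := hf0 0 ⟨le_refl 0, le_refl 0⟩
    show Filter.Tendsto f (nhdsWithin 0 (Set.Ici 0)) (nhds (f 0))
    rw [f0]
    set C : ℝ := MF q 1 / (p-1) / (p-d) with hCdef
    have hCnn : 0 ≤ C :=
      div_nonneg (div_nonneg Stmt5Aux.MF_pos.le (by linarith)) (by linarith)
    refine squeeze_zero' ?_ ?_ ?_ (g := fun x => C * x ^ p)
    · filter_upwards [self_mem_nhdsWithin] with x hx
      rcases eq_or_lt_of_le (Set.mem_Ici.mp hx) with h | h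
      · rw [← h, f0]
      · exact fpos x h
    · filter_upwards [self_mem_nhdsWithin,
        mem_nhdsWithin_of_mem_nhds (Iio_mem_nhds one_pos)] with x hx1 hx2
      rcases eq_or_lt_of_le (Set.mem_Ici.mp hx1) with h | h
      · rw [← h, f0]
        exact mul_nonneg hCnn (Real.rpow_nonneg le_rfl _)
      · rw [hf' x h]
        have h1 : hhF p q d 0 x ≤ C * x ^ (p-d) :=
          Stmt5Aux.hh_bound_zero hp hd1 hdp h.le (le_of_lt hx2)
        have h2 : x ^ d * x ^ (p-d) = x ^ p := by
          rw [← Real.rpow_add h]; norm_num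
        calc x ^ d * hhF p q d 0 x ≤ x ^ d * (C * x ^ (p-d)) :=
              mul_le_mul_of_nonneg_left h1 (Real.rpow_nonneg h.le _)
          _ = C * (x ^ d * x ^ (p-d)) := by ring
          _ = C * x ^ p := by rw [h2]
    · have ht : Filter.Tendsto (fun x : ℝ => C * x ^ p) (nhds 0) (nhds (C * (0:ℝ) ^ p)) :=
        (continuousAt_const.mul (Real.continuousAt_rpow_const 0 p (Or.inr (by linarith)))).tendsto
      rw [Real.zero_rpow (by linarith : p ≠ 0), mul_zero] at ht
      exact ht.mono_left nhdsWithin_le_nhds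
  have dval : ∀ t, 0 < t → HasDerivAt f (if R < t then w t else 0) t := by
    intro t ht
    by_cases h : R < t
    · rw [if_pos h]; exact fderiv_gt t h
    · rw [if_neg h]
      rcases (not_lt.mp h).lt_or_eq with h2 | h2
      · exact fderiv_lt t ht h2
      · rw [h2]; exact fderiv_R (h2 ▸ ht)
  refine MonotoneOn.convexOn_of_deriv (convex_Ici 0) ?_ ?_ ?_
  · intro x hx
    rcases lt_trichotomy x R with h | h | h
    · refine (continuousWithinAt_const (b := (0:ℝ))).congr_of_eventuallyEq ?_
        (hf0 x ⟨hx, h.le⟩)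
      filter_upwards [self_mem_nhdsWithin,
        mem_nhdsWithin_of_mem_nhds (Iio_mem_nhds h)] with t ht1 ht2
      exact hf0 t ⟨ht1, ht2.le⟩
    · rw [h]
      by_cases hR0 : 0 < R
      · exact ((fderiv_R hR0).continuousAt).continuousWithinAt
      · have hR0' : R = 0 := le_antisymm (not_lt.mp hR0) hR
        rw [hR0']
        exact cont00 hR0'
    · exact ((fderiv_gt x h).continuousAt).continuousWithinAt
  · rw [interior_Ici]
    intro x hx
    exact (dval x hx).differentiableAt.differentiableWithinAt
  · rw [interior_Ici]
    intro x hx y hy hxy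
    rw [(dval x hx).deriv, (dval y hy).deriv]
    have hy0 : (0:ℝ) ≤ y := le_of_lt hy
    by_cases h1 : R < x
    · rw [if_pos h1, if_pos (lt_of_lt_of_le h1 hxy)]
      refine add_le_add ?_ (Stmt5Aux.gg_mono hp hR h1.le hxy)
      refine mul_le_mul
        (mul_le_mul_of_nonneg_left (Real.rpow_le_rpow (le_of_lt hx) hxy (by linarith))
          (by linarith))
        (Stmt5Aux.hh_mono hp hdp hR h1.le hxy)
        (Stmt5Aux.hh_nonneg hp hdp hR h1.le)
        (mul_nonneg (by linarith) (Real.rpow_nonneg hy0 _))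
    · rw [if_neg h1]
      by_cases h2 : R < y
      · rw [if_pos h2]
        exact add_nonneg
          (mul_nonneg (mul_nonneg (by linarith) (Real.rpow_nonneg hy0 _))
            (Stmt5Aux.hh_nonneg hp hdp hR h2.le))
          (Stmt5Aux.gg_nonneg hp hR h2.le)
      · rw [if_neg h2]
end

section
/- Let p>1, d ∈ [1,p), q ∈ ℝ, R ≥ 0, and define f(τ) = 0 for τ ∈ [0,R] and f(τ) = τ^d ∫_R^τ s^{-d} (∫_R^s ξ^{p-2} [log(e+ξ)]^q dξ) ds for τ > R. Then f(τ) ≍ τ^p (log τ)^q as τ → ∞, i.e. there exist C ≥ 1 and M > max{4R, e} such that C⁻¹ τ^p (log τ)^q ≤ f(τ) ≤ C τ^p (log τ)^q for all τ ≥ M. -/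
open Real Filter MeasureTheory Set
private lemma aux_e_gt_one : (1:ℝ) < Real.exp 1 := by
  have := Real.exp_one_gt_d9; linarith

private lemma aux_rpow_window_low {a x b r : ℝ} (ha : 0 < a) (hax : a ≤ x) (hxb : x ≤ b) :
    min (a ^ r) (b ^ r) ≤ x ^ r := by
  rcases le_total 0 r with h | h
  · exact (min_le_left _ _).trans (Real.rpow_le_rpow ha.le hax h)
  · exact (min_le_right _ _).trans (Real.rpow_le_rpow_of_nonpos (ha.trans_le hax) hxb h)

private lemma aux_rpow_window_high {a x b r : ℝ} (ha : 0 < a) (hax : a ≤ x) (hxb : x ≤ b) :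
    x ^ r ≤ max (a ^ r) (b ^ r) := by
  rcases le_total 0 r with h | h
  · exact (Real.rpow_le_rpow (ha.le.trans hax) hxb h).trans (le_max_right _ _)
  · exact (Real.rpow_le_rpow_of_nonpos ha hax h).trans (le_max_left _ _)

private lemma aux_min_mul {c₁ c₂ X : ℝ} (hX : 0 ≤ X) :
    min c₁ c₂ * X ≤ min (c₁ * X) (c₂ * X) :=
  le_min (mul_le_mul_of_nonneg_right (min_le_left _ _) hX)
    (mul_le_mul_of_nonneg_right (min_le_right _ _) hX)

private lemma aux_max_mul {c₁ c₂ X : ℝ} (hX : 0 ≤ X) :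
    max (c₁ * X) (c₂ * X) ≤ max c₁ c₂ * X :=
  max_le (mul_le_mul_of_nonneg_right (le_max_left _ _) hX)
    (mul_le_mul_of_nonneg_right (le_max_right _ _) hX)

/-- Eventually `x ^ (-β) ≤ (log x) ^ q`. -/
private lemma aux_log_rpow_lower (q β : ℝ) (hβ : 0 < β) :
    ∀ᶠ x in atTop, x ^ (-β) ≤ Real.log x ^ q := by
  rcases le_or_gt 0 q with hq | hq
  · filter_upwards [eventually_ge_atTop (Real.exp 1)] with x hx
    have hx1 : (1:ℝ) ≤ x := aux_e_gt_one.le.trans hx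
    have hlog : 1 ≤ Real.log x := by
      rw [← Real.log_exp 1]; exact Real.log_le_log (Real.exp_pos 1) hx
    calc x ^ (-β) ≤ 1 := Real.rpow_le_one_of_one_le_of_nonpos hx1 (by linarith)
      _ = (1:ℝ) ^ q := (Real.one_rpow q).symm
      _ ≤ Real.log x ^ q := Real.rpow_le_rpow zero_le_one hlog hq
  · have hq' : 0 < -q := by linarith
    have hδ : 0 < β / (-q) := div_pos hβ hq'
    have h := (isLittleO_log_rpow_atTop hδ).def one_pos
    filter_upwards [h, eventually_ge_atTop (Real.exp 1)] with x hx hxe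
    have hx1 : (1:ℝ) ≤ x := aux_e_gt_one.le.trans hxe
    have hx0 : (0:ℝ) ≤ x := by linarith
    have hlog : 1 ≤ Real.log x := by
      rw [← Real.log_exp 1]; exact Real.log_le_log (Real.exp_pos 1) hxe
    have hxd : Real.log x ≤ x ^ (β / (-q)) := by
      rw [Real.norm_eq_abs, Real.norm_eq_abs, one_mul] at hx
      calc Real.log x ≤ |Real.log x| := le_abs_self _
        _ ≤ |x ^ (β / (-q))| := hx
        _ = x ^ (β / (-q)) := abs_of_nonneg (Real.rpow_nonneg hx0 _)
    have h2 : Real.log x ^ (-q) ≤ x ^ β := by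
      calc Real.log x ^ (-q)
          ≤ (x ^ (β / (-q))) ^ (-q) := Real.rpow_le_rpow (by linarith) hxd (by linarith)
        _ = x ^ (β / (-q) * (-q)) := (Real.rpow_mul hx0 _ _).symm
        _ = x ^ β := by rw [div_mul_cancel₀ _ (ne_of_gt hq')]
    have hlx : 0 < Real.log x ^ (-q) := Real.rpow_pos_of_pos (by linarith) _
    calc x ^ (-β) = (x ^ β)⁻¹ := Real.rpow_neg hx0 β
      _ ≤ (Real.log x ^ (-q))⁻¹ := inv_anti₀ hlx h2
      _ = Real.log x ^ q := by
          rw [← Real.rpow_neg (by linarith : (0:ℝ) ≤ Real.log x), neg_neg]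

/-- Eventually `K ≤ τ ^ α * (log τ) ^ q` when `α > 0`. -/
private lemma aux_T (α q K : ℝ) (hα : 0 < α) :
    ∀ᶠ τ in atTop, K ≤ τ ^ α * Real.log τ ^ q := by
  have h1 := aux_log_rpow_lower q (α / 2) (by linarith)
  have h2 := (tendsto_rpow_atTop (show 0 < α / 2 by linarith)).eventually_ge_atTop K
  filter_upwards [h1, h2, eventually_ge_atTop (1:ℝ)] with τ hτ1 hτ2 hτ3
  have hτ0 : (0:ℝ) < τ := by linarith
  have key : τ ^ (α / 2) ≤ τ ^ α * Real.log τ ^ q := by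
    have : τ ^ α * τ ^ (-(α / 2)) ≤ τ ^ α * Real.log τ ^ q :=
      mul_le_mul_of_nonneg_left hτ1 (Real.rpow_nonneg hτ0.le _)
    calc τ ^ (α / 2) = τ ^ (α + -(α / 2)) := by rw [show α + -(α / 2) = α / 2 by ring]
      _ = τ ^ α * τ ^ (-(α / 2)) := Real.rpow_add hτ0 _ _
      _ ≤ τ ^ α * Real.log τ ^ q := this
  exact hτ2.trans key

private lemma aux_model_int (γ q a b : ℝ) (hA : 1 < a) (hB : 1 < b) :
    IntervalIntegrable (fun s : ℝ => s ^ γ * Real.log s ^ q) volume a b := by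
  apply ContinuousOn.intervalIntegrable
  have h1 : ∀ x ∈ Set.uIcc a b, (1:ℝ) < x := fun x hx => (lt_min hA hB).trans_le hx.1
  apply ContinuousOn.mul
  · exact continuousOn_id.rpow_const fun x hx => Or.inl (zero_lt_one.trans (h1 x hx)).ne'
  · apply ContinuousOn.rpow_const
    · exact Real.continuousOn_log.mono fun x hx =>
        Set.mem_compl_singleton_iff.mpr (zero_lt_one.trans (h1 x hx)).ne'
    · exact fun x hx => Or.inl (Real.log_pos (h1 x hx)).ne'

private lemma aux_w_int (p q a b : ℝ) (hp : 1 < p) (ha : 0 ≤ a) (hb : 0 ≤ b) :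
    IntervalIntegrable (fun ξ : ℝ => ξ ^ (p-2) * Real.log (Real.exp 1 + ξ) ^ q) volume a b := by
  apply IntervalIntegrable.mul_continuousOn
    (intervalIntegral.intervalIntegrable_rpow' (by linarith))
  have hsub : ∀ x ∈ Set.uIcc a b, (0:ℝ) ≤ x := fun x hx => (le_min ha hb).trans hx.1
  have hpos : ∀ x ∈ Set.uIcc a b, 0 < Real.exp 1 + x := fun x hx => by
    have h1 := hsub x hx; have h2 := Real.exp_pos 1; linarith
  apply ContinuousOn.rpow_const
  · exact ContinuousOn.log ((continuous_const.add continuous_id).continuousOn)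
      (fun x hx => (hpos x hx).ne')
  · intro x hx; left
    have h0 : (0:ℝ) ≤ x := hsub x hx
    have h1 : 1 ≤ Real.log (Real.exp 1 + x) := by
      calc (1:ℝ) = Real.log (Real.exp 1) := (Real.log_exp 1).symm
        _ ≤ Real.log (Real.exp 1 + x) := Real.log_le_log (Real.exp_pos 1) (by linarith)
    exact (zero_lt_one.trans_le h1).ne'

private lemma aux_U (γ q a : ℝ) (hγ : -1 < γ) (ha : Real.exp 1 ≤ a) :
    ∃ C : ℝ, 0 < C ∧ ∀ᶠ τ in atTop,
      (∫ s in a..τ, s ^ γ * Real.log s ^ q) ≤ C * (τ ^ (γ+1) * Real.log τ ^ q) := by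
  have ha1 : (1:ℝ) < a := aux_e_gt_one.trans_le ha
  have ha0 : (0:ℝ) < a := by linarith
  have hγ1 : (0:ℝ) < γ + 1 := by linarith
  rcases le_or_gt 0 q with hq | hq
  · refine ⟨1/(γ+1), by positivity, ?_⟩
    filter_upwards [eventually_ge_atTop a] with τ hτ
    have hτ1 : (1:ℝ) < τ := lt_of_lt_of_le ha1 hτ
    have hτ0 : (0:ℝ) < τ := by linarith
    have hlogτ : 0 ≤ Real.log τ := Real.log_nonneg hτ1.le
    have hmono : ∀ s ∈ Set.Icc a τ, s ^ γ * Real.log s ^ q ≤ s ^ γ * Real.log τ ^ q := by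
      intro s hs
      have hs1 : (1:ℝ) < s := lt_of_lt_of_le ha1 hs.1
      exact mul_le_mul_of_nonneg_left
        (Real.rpow_le_rpow (Real.log_nonneg hs1.le) (Real.log_le_log (by linarith) hs.2) hq)
        (Real.rpow_nonneg (by linarith) _)
    have hint1 := aux_model_int γ q a τ ha1 hτ1
    have hint2 : IntervalIntegrable (fun s : ℝ => s ^ γ * Real.log τ ^ q) volume a τ :=
      (intervalIntegral.intervalIntegrable_rpow' hγ).mul_const _
    calc (∫ s in a..τ, s ^ γ * Real.log s ^ q)
        ≤ ∫ s in a..τ, s ^ γ * Real.log τ ^ q :=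
          intervalIntegral.integral_mono_on hτ hint1 hint2 hmono
      _ = (∫ s in a..τ, s ^ γ) * Real.log τ ^ q := by
          rw [← intervalIntegral.integral_mul_const]
      _ = ((τ ^ (γ+1) - a ^ (γ+1))/(γ+1)) * Real.log τ ^ q := by
          rw [integral_rpow (Or.inl hγ)]
      _ ≤ (τ ^ (γ+1)/(γ+1)) * Real.log τ ^ q := by
          apply mul_le_mul_of_nonneg_right _ (Real.rpow_nonneg hlogτ q)
          have h0 : (0:ℝ) ≤ a ^ (γ+1) := Real.rpow_nonneg ha0.le (γ+1)
          exact (div_le_div_iff_of_pos_right hγ1).mpr (by linarith)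
      _ = (1/(γ+1)) * (τ ^ (γ+1) * Real.log τ ^ q) := by ring
  · refine ⟨(1 + 2 ^ (-q))/(γ+1), by positivity, ?_⟩
    have hLQ := aux_log_rpow_lower q ((γ+1)/2) (by linarith)
    filter_upwards [hLQ, eventually_ge_atTop (a*a), eventually_ge_atTop (1:ℝ)]
      with τ hτLQ hτa2 hτge1
    have hτa : a ≤ τ := by nlinarith
    have hτ0 : (0:ℝ) < τ := by linarith
    have hτgt1 : (1:ℝ) < τ := lt_of_lt_of_le ha1 hτa
    set σ := τ ^ ((1:ℝ)/2) with hσdef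
    have hσa : a ≤ σ := by
      have h1 : (a*a) ^ ((1:ℝ)/2) ≤ σ := Real.rpow_le_rpow (by positivity) hτa2 (by norm_num)
      have h2 : (a*a) ^ ((1:ℝ)/2) = a := by
        rw [show a*a = a ^ (2:ℝ) by
            rw [show (2:ℝ) = ((2:ℕ):ℝ) by norm_num, Real.rpow_natCast]; ring,
          ← Real.rpow_mul ha0.le]
        norm_num
      linarith
    have hσ1 : (1:ℝ) < σ := lt_of_lt_of_le ha1 hσa
    have hστ : σ ≤ τ := by
      calc σ ≤ τ ^ (1:ℝ) := Real.rpow_le_rpow_of_exponent_le hτgt1.le (by norm_num)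
        _ = τ := Real.rpow_one τ
    have hlogσ : Real.log σ = (1/2) * Real.log τ := Real.log_rpow hτ0 _
    have hlogτ1 : 1 ≤ Real.log τ := by
      calc (1:ℝ) = Real.log (Real.exp 1) := (Real.log_exp 1).symm
        _ ≤ Real.log τ := Real.log_le_log (Real.exp_pos 1) (le_trans ha hτa)
    have hI1 := aux_model_int γ q a σ ha1 hσ1
    have hI2 := aux_model_int γ q σ τ hσ1 hτgt1
    have hsplit := intervalIntegral.integral_add_adjacent_intervals hI1 hI2
    have hσpow : σ ^ (γ+1) = τ ^ ((γ+1)/2) := by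
      rw [hσdef, ← Real.rpow_mul hτ0.le, show (1:ℝ)/2 * (γ+1) = (γ+1)/2 by ring]
    have hhalfpow : τ ^ ((γ+1)/2) ≤ τ ^ (γ+1) * Real.log τ ^ q := by
      have h1 : τ ^ (γ+1) * τ ^ (-((γ+1)/2)) ≤ τ ^ (γ+1) * Real.log τ ^ q :=
        mul_le_mul_of_nonneg_left hτLQ (Real.rpow_nonneg hτ0.le _)
      calc τ ^ ((γ+1)/2) = τ ^ ((γ+1) + -((γ+1)/2)) := by
            rw [show (γ+1) + -((γ+1)/2) = (γ+1)/2 by ring]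
        _ = τ ^ (γ+1) * τ ^ (-((γ+1)/2)) := Real.rpow_add hτ0 _ _
        _ ≤ τ ^ (γ+1) * Real.log τ ^ q := h1
    have hb1 : (∫ s in a..σ, s ^ γ * Real.log s ^ q) ≤ τ ^ (γ+1) * Real.log τ ^ q / (γ+1) := by
      have hmono : ∀ s ∈ Set.Icc a σ, s ^ γ * Real.log s ^ q ≤ s ^ γ := by
        intro s hs
        have hs1 : (1:ℝ) < s := lt_of_lt_of_le ha1 hs.1
        have hlogs : 1 ≤ Real.log s := by
          calc (1:ℝ) = Real.log (Real.exp 1) := (Real.log_exp 1).symm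
            _ ≤ Real.log s := Real.log_le_log (Real.exp_pos 1) (le_trans ha hs.1)
        calc s ^ γ * Real.log s ^ q
            ≤ s ^ γ * 1 := mul_le_mul_of_nonneg_left
              (Real.rpow_le_one_of_one_le_of_nonpos hlogs hq.le)
              (Real.rpow_nonneg (by linarith) _)
          _ = s ^ γ := mul_one _
      have hint2 : IntervalIntegrable (fun s : ℝ => s ^ γ) volume a σ :=
        intervalIntegral.intervalIntegrable_rpow' hγ
      calc (∫ s in a..σ, s ^ γ * Real.log s ^ q)
          ≤ ∫ s in a..σ, s ^ γ := intervalIntegral.integral_mono_on hσa hI1 hint2 hmono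
        _ = (σ ^ (γ+1) - a ^ (γ+1))/(γ+1) := integral_rpow (Or.inl hγ)
        _ ≤ σ ^ (γ+1)/(γ+1) := by
            have h0 : (0:ℝ) ≤ a ^ (γ+1) := Real.rpow_nonneg ha0.le (γ+1)
            exact (div_le_div_iff_of_pos_right hγ1).mpr (by linarith)
        _ ≤ τ ^ (γ+1) * Real.log τ ^ q / (γ+1) := by
            rw [hσpow]
            exact (div_le_div_iff_of_pos_right hγ1).mpr hhalfpow
    have hb2 : (∫ s in σ..τ, s ^ γ * Real.log s ^ q)
        ≤ (2 ^ (-q) / (γ+1)) * (τ ^ (γ+1) * Real.log τ ^ q) := by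
      have hc0 : (0:ℝ) < (1/2) * Real.log τ := by linarith
      have hmono : ∀ s ∈ Set.Icc σ τ,
          s ^ γ * Real.log s ^ q ≤ s ^ γ * ((1/2) * Real.log τ) ^ q := by
        intro s hs
        have hs1 : (1:ℝ) < s := lt_of_lt_of_le hσ1 hs.1
        have hls : (1/2) * Real.log τ ≤ Real.log s := by
          rw [← hlogσ]; exact Real.log_le_log (by linarith) hs.1
        exact mul_le_mul_of_nonneg_left
          (Real.rpow_le_rpow_of_nonpos hc0 hls hq.le)
          (Real.rpow_nonneg (by linarith) _)
      have hint2 : IntervalIntegrable (fun s : ℝ => s ^ γ * ((1/2) * Real.log τ) ^ q)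
          volume σ τ := (intervalIntegral.intervalIntegrable_rpow' hγ).mul_const _
      have hcq : ((1/2) * Real.log τ) ^ q = 2 ^ (-q) * Real.log τ ^ q := by
        rw [Real.mul_rpow (by norm_num) (by linarith)]
        congr 1
        rw [one_div, Real.inv_rpow (by norm_num : (0:ℝ) ≤ 2), ← Real.rpow_neg
          (by norm_num : (0:ℝ) ≤ 2)]
      have hcqnn : (0:ℝ) ≤ ((1/2) * Real.log τ) ^ q := Real.rpow_nonneg hc0.le q
      calc (∫ s in σ..τ, s ^ γ * Real.log s ^ q)
          ≤ ∫ s in σ..τ, s ^ γ * ((1/2) * Real.log τ) ^ q :=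
            intervalIntegral.integral_mono_on hστ hI2 hint2 hmono
        _ = (∫ s in σ..τ, s ^ γ) * ((1/2) * Real.log τ) ^ q := by
            rw [← intervalIntegral.integral_mul_const]
        _ = ((τ ^ (γ+1) - σ ^ (γ+1))/(γ+1)) * ((1/2) * Real.log τ) ^ q := by
            rw [integral_rpow (Or.inl hγ)]
        _ ≤ (τ ^ (γ+1)/(γ+1)) * ((1/2) * Real.log τ) ^ q := by
            apply mul_le_mul_of_nonneg_right _ hcqnn
            have h0 : (0:ℝ) ≤ σ ^ (γ+1) := Real.rpow_nonneg (by linarith) (γ+1)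
            exact (div_le_div_iff_of_pos_right hγ1).mpr (by linarith)
        _ = (2 ^ (-q) / (γ+1)) * (τ ^ (γ+1) * Real.log τ ^ q) := by rw [hcq]; ring
    calc (∫ s in a..τ, s ^ γ * Real.log s ^ q)
        = (∫ s in a..σ, s ^ γ * Real.log s ^ q) + ∫ s in σ..τ, s ^ γ * Real.log s ^ q :=
          hsplit.symm
      _ ≤ (1 + 2 ^ (-q))/(γ+1) * (τ ^ (γ+1) * Real.log τ ^ q) := by
          have hiden : (1 + 2 ^ (-q))/(γ+1) * (τ ^ (γ+1) * Real.log τ ^ q)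
              = τ ^ (γ+1) * Real.log τ ^ q / (γ+1)
                + (2 ^ (-q) / (γ+1)) * (τ ^ (γ+1) * Real.log τ ^ q) := by ring
          linarith

private lemma aux_Lo (γ q a : ℝ) (hγ : -1 < γ) (ha : Real.exp 1 ≤ a) :
    ∃ c : ℝ, 0 < c ∧ ∀ᶠ τ in atTop,
      c * (τ ^ (γ+1) * Real.log τ ^ q) ≤ ∫ s in a..τ, s ^ γ * Real.log s ^ q := by
  have ha1 : (1:ℝ) < a := aux_e_gt_one.trans_le ha
  have hγ1 : (0:ℝ) < γ + 1 := by linarith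
  refine ⟨(min ((1/2:ℝ) ^ γ) 1 * min ((1/2:ℝ) ^ q) 1)/2, by positivity, ?_⟩
  filter_upwards [eventually_ge_atTop (2*a), eventually_ge_atTop (4:ℝ)] with τ hτ2a hτ4
  have hτ0 : (0:ℝ) < τ := by linarith
  have ha0 : (0:ℝ) < a := by linarith
  have hhalf : a ≤ τ/2 := by linarith
  have hhalf1 : (1:ℝ) < τ/2 := lt_of_lt_of_le ha1 hhalf
  have hτ1 : (1:ℝ) < τ := by linarith
  have hlogτ : 1 ≤ Real.log τ := by
    calc (1:ℝ) = Real.log (Real.exp 1) := (Real.log_exp 1).symm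
      _ ≤ Real.log τ := Real.log_le_log (Real.exp_pos 1) (by linarith)
  have hlog_half : (1/2) * Real.log τ ≤ Real.log (τ/2) := by
    rw [Real.log_div (by linarith) (by norm_num)]
    have h4 : Real.log 4 ≤ Real.log τ := Real.log_le_log (by norm_num) hτ4
    have h42 : Real.log 4 = 2 * Real.log 2 := by
      rw [show (4:ℝ) = 2^(2:ℕ) by norm_num, Real.log_pow]; push_cast; ring
    linarith
  set c0 := min ((1/2:ℝ) ^ γ) 1 * min ((1/2:ℝ) ^ q) 1 with hc0
  have hptwise : ∀ s ∈ Set.Icc (τ/2) τ,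
      c0 * (τ ^ γ * Real.log τ ^ q) ≤ s ^ γ * Real.log s ^ q := by
    intro s hs
    have hs0 : (0:ℝ) < s := by linarith [hs.1]
    have h1 : min ((1/2:ℝ)^γ) 1 * τ ^ γ ≤ s ^ γ := by
      have hw := aux_rpow_window_low (r := γ) (show (0:ℝ) < τ/2 by linarith) hs.1 hs.2
      have he1 : (τ/2) ^ γ = (1/2:ℝ)^γ * τ ^ γ := by
        rw [show τ/2 = (1/2)*τ by ring, Real.mul_rpow (by norm_num) hτ0.le]
      calc min ((1/2:ℝ)^γ) 1 * τ ^ γ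
          ≤ min ((1/2:ℝ)^γ * τ ^ γ) (1 * τ ^ γ) := aux_min_mul (Real.rpow_nonneg hτ0.le γ)
        _ = min ((τ/2) ^ γ) (τ ^ γ) := by rw [← he1, one_mul]
        _ ≤ s ^ γ := hw
    have h2 : min ((1/2:ℝ)^q) 1 * Real.log τ ^ q ≤ Real.log s ^ q := by
      have hls : (1/2) * Real.log τ ≤ Real.log s :=
        hlog_half.trans (Real.log_le_log (by linarith) hs.1)
      have hls2 : Real.log s ≤ Real.log τ := Real.log_le_log hs0 hs.2
      have hw := aux_rpow_window_low (r := q)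
        (show (0:ℝ) < (1/2) * Real.log τ by linarith) hls hls2
      have he1 : ((1/2) * Real.log τ) ^ q = (1/2:ℝ)^q * Real.log τ ^ q :=
        Real.mul_rpow (by norm_num) (by linarith)
      calc min ((1/2:ℝ)^q) 1 * Real.log τ ^ q
          ≤ min ((1/2:ℝ)^q * Real.log τ ^ q) (1 * Real.log τ ^ q) :=
            aux_min_mul (Real.rpow_nonneg (by linarith) q)
        _ = min (((1/2) * Real.log τ) ^ q) (Real.log τ ^ q) := by rw [← he1, one_mul]
        _ ≤ Real.log s ^ q := hw
    calc c0 * (τ ^ γ * Real.log τ ^ q)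
        = (min ((1/2:ℝ)^γ) 1 * τ ^ γ) * (min ((1/2:ℝ)^q) 1 * Real.log τ ^ q) := by
          rw [hc0]; ring
      _ ≤ s ^ γ * Real.log s ^ q := mul_le_mul h1 h2
          (mul_nonneg (le_min (Real.rpow_nonneg (by norm_num) q) zero_le_one)
            (Real.rpow_nonneg (by linarith) q))
          (Real.rpow_nonneg hs0.le γ)
  have hI1 := aux_model_int γ q a (τ/2) ha1 hhalf1
  have hI2 := aux_model_int γ q (τ/2) τ hhalf1 hτ1
  have hsplit := intervalIntegral.integral_add_adjacent_intervals hI1 hI2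
  have hnn : 0 ≤ ∫ s in a..(τ/2), s ^ γ * Real.log s ^ q := by
    apply intervalIntegral.integral_nonneg hhalf
    intro s hs
    have hs1 : (1:ℝ) ≤ s := le_trans ha1.le hs.1
    exact mul_nonneg (Real.rpow_nonneg (by linarith) _)
      (Real.rpow_nonneg (Real.log_nonneg hs1) _)
  have hmain : (τ/2) * (c0 * (τ ^ γ * Real.log τ ^ q))
      ≤ ∫ s in (τ/2)..τ, s ^ γ * Real.log s ^ q := by
    have h := intervalIntegral.integral_mono_on (by linarith : τ/2 ≤ τ)
      intervalIntegrable_const hI2 hptwise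
    rwa [intervalIntegral.integral_const, smul_eq_mul, show τ - τ/2 = τ/2 by ring] at h
  have hpow : τ ^ γ * τ = τ ^ (γ+1) := (Real.rpow_add_one (ne_of_gt hτ0) γ).symm
  calc (c0/2) * (τ ^ (γ+1) * Real.log τ ^ q)
      = (τ/2) * (c0 * (τ ^ γ * Real.log τ ^ q)) := by rw [← hpow]; ring
    _ ≤ ∫ s in (τ/2)..τ, s ^ γ * Real.log s ^ q := hmain
    _ ≤ ∫ s in a..τ, s ^ γ * Real.log s ^ q := by rw [← hsplit]; linarith

theorem stmt_6 (p d q R : ℝ) (hp : 1 < p) (hd1 : 1 ≤ d) (hdp : d < p) (hR : 0 ≤ R)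
    (f : ℝ → ℝ)
    (hf0 : ∀ τ ∈ Set.Icc (0:ℝ) R, f τ = 0)
    (hf : ∀ τ : ℝ, R < τ →
      f τ = τ ^ d * ∫ s in R..τ, s ^ (-d) *
        ∫ ξ in R..s, ξ ^ (p-2) * Real.log (Real.exp 1 + ξ) ^ q) :
    ∃ C : ℝ, 1 ≤ C ∧ ∃ M : ℝ, max (4*R) (Real.exp 1) < M ∧ ∀ τ : ℝ, M ≤ τ →
      C⁻¹ * (τ ^ p * Real.log τ ^ q) ≤ f τ ∧ f τ ≤ C * (τ ^ p * Real.log τ ^ q) := by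
  have he1 : (1:ℝ) < Real.exp 1 := aux_e_gt_one
  set w : ℝ → ℝ := fun ξ => ξ ^ (p-2) * Real.log (Real.exp 1 + ξ) ^ q with hwdef
  set G : ℝ → ℝ := fun s => ∫ ξ in R..s, w ξ with hGdef
  set W : ℝ → ℝ := fun s => s ^ (-d) * G s with hWdef
  -- basic facts
  have hwnn : ∀ ξ : ℝ, 0 ≤ ξ → 0 ≤ w ξ := by
    intro ξ hξ
    have hL : (0:ℝ) ≤ Real.log (Real.exp 1 + ξ) := Real.log_nonneg (by linarith)
    exact mul_nonneg (Real.rpow_nonneg hξ _) (Real.rpow_nonneg hL _)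
  have hwint : ∀ a b : ℝ, 0 ≤ a → 0 ≤ b → IntervalIntegrable w volume a b :=
    fun a b ha hb => aux_w_int p q a b hp ha hb
  have hGnn : ∀ s : ℝ, R ≤ s → 0 ≤ G s := fun s hs =>
    intervalIntegral.integral_nonneg hs (fun ξ hξ => hwnn ξ (hR.trans hξ.1))
  -- comparison of w with the model integrand
  have hwcomp : ∀ ξ : ℝ, Real.exp 1 ≤ ξ →
      min 1 ((2:ℝ)^q) * (ξ ^ (p-2) * Real.log ξ ^ q) ≤ w ξ ∧
      w ξ ≤ max 1 ((2:ℝ)^q) * (ξ ^ (p-2) * Real.log ξ ^ q) := by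
    intro ξ hξ
    have hξ1 : (1:ℝ) < ξ := lt_of_lt_of_le he1 hξ
    have hξ0 : (0:ℝ) < ξ := by linarith
    have hlog1 : 1 ≤ Real.log ξ := by
      calc (1:ℝ) = Real.log (Real.exp 1) := (Real.log_exp 1).symm
        _ ≤ Real.log ξ := Real.log_le_log (Real.exp_pos 1) hξ
    have hlogpos : (0:ℝ) < Real.log ξ := by linarith
    have hLlow : Real.log ξ ≤ Real.log (Real.exp 1 + ξ) :=
      Real.log_le_log hξ0 (by linarith [Real.exp_pos 1])
    have hLhigh : Real.log (Real.exp 1 + ξ) ≤ 2 * Real.log ξ := by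
      have h1 : Real.log (Real.exp 1 + ξ) ≤ Real.log (2*ξ) :=
        Real.log_le_log (by linarith [Real.exp_pos 1]) (by linarith)
      have h2 : Real.log (2*ξ) = Real.log 2 + Real.log ξ :=
        Real.log_mul (by norm_num) (ne_of_gt hξ0)
      have h3 : Real.log 2 ≤ 1 := by
        calc Real.log 2 ≤ Real.log (Real.exp 1) :=
            Real.log_le_log (by norm_num) (by nlinarith [Real.exp_one_gt_d9])
          _ = 1 := Real.log_exp 1
      linarith
    have hered : (2 * Real.log ξ) ^ q = (2:ℝ)^q * Real.log ξ ^ q :=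
      Real.mul_rpow (by norm_num) hlogpos.le
    have hmin : min 1 ((2:ℝ)^q) * Real.log ξ ^ q ≤ Real.log (Real.exp 1 + ξ) ^ q := by
      have h := aux_rpow_window_low (r := q) hlogpos hLlow hLhigh
      calc min 1 ((2:ℝ)^q) * Real.log ξ ^ q
          ≤ min (1 * Real.log ξ ^ q) ((2:ℝ)^q * Real.log ξ ^ q) :=
            aux_min_mul (Real.rpow_nonneg hlogpos.le q)
        _ = min (Real.log ξ ^ q) ((2 * Real.log ξ) ^ q) := by rw [one_mul, hered]
        _ ≤ _ := h
    have hmax : Real.log (Real.exp 1 + ξ) ^ q ≤ max 1 ((2:ℝ)^q) * Real.log ξ ^ q := by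
      have h := aux_rpow_window_high (r := q) hlogpos hLlow hLhigh
      calc Real.log (Real.exp 1 + ξ) ^ q
          ≤ max (Real.log ξ ^ q) ((2 * Real.log ξ) ^ q) := h
        _ = max (1 * Real.log ξ ^ q) ((2:ℝ)^q * Real.log ξ ^ q) := by rw [one_mul, hered]
        _ ≤ max 1 ((2:ℝ)^q) * Real.log ξ ^ q :=
            aux_max_mul (Real.rpow_nonneg hlogpos.le q)
    have hξp : (0:ℝ) ≤ ξ ^ (p-2) := Real.rpow_nonneg hξ0.le _
    constructor
    · calc min 1 ((2:ℝ)^q) * (ξ ^ (p-2) * Real.log ξ ^ q)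
          = ξ ^ (p-2) * (min 1 ((2:ℝ)^q) * Real.log ξ ^ q) := by ring
        _ ≤ ξ ^ (p-2) * Real.log (Real.exp 1 + ξ) ^ q :=
            mul_le_mul_of_nonneg_left hmin hξp
    · calc w ξ = ξ ^ (p-2) * Real.log (Real.exp 1 + ξ) ^ q := rfl
        _ ≤ ξ ^ (p-2) * (max 1 ((2:ℝ)^q) * Real.log ξ ^ q) :=
            mul_le_mul_of_nonneg_left hmax hξp
        _ = max 1 ((2:ℝ)^q) * (ξ ^ (p-2) * Real.log ξ ^ q) := by ring
  -- set up constants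
  set a0 : ℝ := R + Real.exp 1 with ha0def
  have ha0e : Real.exp 1 ≤ a0 := by linarith
  have ha0R : R ≤ a0 := by linarith [Real.exp_pos 1]
  have ha00 : (0:ℝ) < a0 := by linarith [Real.exp_pos 1]
  have ha01 : (1:ℝ) < a0 := lt_of_lt_of_le he1 ha0e
  obtain ⟨CU, hCUpos, hCUev⟩ := aux_U (p-2) q a0 (by linarith) ha0e
  obtain ⟨cL, hcLpos, hcLev⟩ := aux_Lo (p-2) q a0 (by linarith) ha0e
  have hT1 := aux_T (p-1) q (∫ ξ in R..a0, w ξ) (by linarith)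
  set cw := min 1 ((2:ℝ)^q) with hcwdef
  set Cw := max 1 ((2:ℝ)^q) with hCwdef
  have hcwpos : 0 < cw := lt_min one_pos (Real.rpow_pos_of_pos two_pos q)
  have hCwpos : 0 < Cw := lt_of_lt_of_le one_pos (le_max_left _ _)
  set c1 := cw * cL with hc1def
  set C1 := 1 + Cw * CU with hC1def
  have hc1pos : 0 < c1 := mul_pos hcwpos hcLpos
  have hC1pos : 0 < C1 := by nlinarith
  -- inner bounds
  have hGbound : ∀ᶠ s in atTop,
      c1 * (s ^ (p-1) * Real.log s ^ q) ≤ G s ∧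
      G s ≤ C1 * (s ^ (p-1) * Real.log s ^ q) := by
    filter_upwards [hCUev, hcLev, hT1, eventually_ge_atTop a0] with s hU hLo hT hsa0
    rw [show p - 2 + 1 = p - 1 by ring] at hU hLo
    have hs1 : (1:ℝ) < s := lt_of_lt_of_le ha01 hsa0
    have hs0 : (0:ℝ) < s := by linarith
    have hsplit : G s = (∫ ξ in R..a0, w ξ) + ∫ ξ in a0..s, w ξ :=
      (intervalIntegral.integral_add_adjacent_intervals
        (hwint R a0 hR ha00.le) (hwint a0 s ha00.le hs0.le)).symm
    have hmodint := aux_model_int (p-2) q a0 s ha01 hs1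
    have hwle : ∀ ξ ∈ Set.Icc a0 s, w ξ ≤ Cw * (ξ ^ (p-2) * Real.log ξ ^ q) :=
      fun ξ hξ => (hwcomp ξ (ha0e.trans hξ.1)).2
    have hwge : ∀ ξ ∈ Set.Icc a0 s, cw * (ξ ^ (p-2) * Real.log ξ ^ q) ≤ w ξ :=
      fun ξ hξ => (hwcomp ξ (ha0e.trans hξ.1)).1
    have hup : (∫ ξ in a0..s, w ξ) ≤ Cw * (CU * (s ^ (p-1) * Real.log s ^ q)) := by
      calc (∫ ξ in a0..s, w ξ)
          ≤ ∫ ξ in a0..s, Cw * (ξ ^ (p-2) * Real.log ξ ^ q) :=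
            intervalIntegral.integral_mono_on hsa0 (hwint a0 s ha00.le hs0.le)
              (hmodint.const_mul Cw) hwle
        _ = Cw * ∫ ξ in a0..s, ξ ^ (p-2) * Real.log ξ ^ q :=
            intervalIntegral.integral_const_mul Cw _
        _ ≤ Cw * (CU * (s ^ (p-1) * Real.log s ^ q)) :=
            mul_le_mul_of_nonneg_left hU hCwpos.le
    have hlo : cw * (cL * (s ^ (p-1) * Real.log s ^ q)) ≤ ∫ ξ in a0..s, w ξ := by
      calc cw * (cL * (s ^ (p-1) * Real.log s ^ q))
          ≤ cw * ∫ ξ in a0..s, ξ ^ (p-2) * Real.log ξ ^ q :=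
            mul_le_mul_of_nonneg_left hLo hcwpos.le
        _ = ∫ ξ in a0..s, cw * (ξ ^ (p-2) * Real.log ξ ^ q) :=
            (intervalIntegral.integral_const_mul cw _).symm
        _ ≤ ∫ ξ in a0..s, w ξ :=
            intervalIntegral.integral_mono_on hsa0 (hmodint.const_mul cw)
              (hwint a0 s ha00.le hs0.le) hwge
    have hheadnn : 0 ≤ ∫ ξ in R..a0, w ξ :=
      intervalIntegral.integral_nonneg ha0R (fun ξ hξ => hwnn ξ (hR.trans hξ.1))
    constructor
    · calc c1 * (s ^ (p-1) * Real.log s ^ q)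
          = cw * (cL * (s ^ (p-1) * Real.log s ^ q)) := by rw [hc1def]; ring
        _ ≤ ∫ ξ in a0..s, w ξ := hlo
        _ ≤ G s := by rw [hsplit]; linarith
    · calc G s = (∫ ξ in R..a0, w ξ) + ∫ ξ in a0..s, w ξ := hsplit
        _ ≤ (s ^ (p-1) * Real.log s ^ q) + Cw * (CU * (s ^ (p-1) * Real.log s ^ q)) := by
            linarith
        _ = C1 * (s ^ (p-1) * Real.log s ^ q) := by rw [hC1def]; ring
  rw [eventually_atTop] at hGbound
  obtain ⟨M10, hM10⟩ := hGbound
  set M1 := max M10 (a0 + 1) with hM1def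
  have hM1a0 : a0 + 1 ≤ M1 := le_max_right _ _
  have hM1e : Real.exp 1 ≤ M1 := by linarith
  have hM1R : R < M1 := by linarith [Real.exp_pos 1]
  have hM11 : (1:ℝ) < M1 := lt_of_lt_of_le he1 hM1e
  have hM10' : ∀ s : ℝ, M1 ≤ s →
      c1 * (s ^ (p-1) * Real.log s ^ q) ≤ G s ∧
      G s ≤ C1 * (s ^ (p-1) * Real.log s ^ q) :=
    fun s hs => hM10 s ((le_max_left _ _).trans hs)
  -- comparison of W with the model integrand
  have hWcomp : ∀ s : ℝ, M1 ≤ s →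
      c1 * (s ^ (p-1-d) * Real.log s ^ q) ≤ W s ∧
      W s ≤ C1 * (s ^ (p-1-d) * Real.log s ^ q) := by
    intro s hs
    have hs0 : (0:ℝ) < s := lt_of_lt_of_le (by linarith) hs
    obtain ⟨hg1, hg2⟩ := hM10' s hs
    have hsd : (0:ℝ) ≤ s ^ (-d) := Real.rpow_nonneg hs0.le _
    have hkey : ∀ X : ℝ, s ^ (-d) * (s ^ (p-1) * X) = s ^ (p-1-d) * X := by
      intro X
      rw [show p-1-d = -d + (p-1) by ring, Real.rpow_add hs0]
      ring
    constructor
    · calc c1 * (s ^ (p-1-d) * Real.log s ^ q)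
          = s ^ (-d) * (c1 * (s ^ (p-1) * Real.log s ^ q)) := by
            rw [← hkey (Real.log s ^ q)]; ring
        _ ≤ s ^ (-d) * G s := mul_le_mul_of_nonneg_left hg1 hsd
        _ = W s := rfl
    · calc W s = s ^ (-d) * G s := rfl
        _ ≤ s ^ (-d) * (C1 * (s ^ (p-1) * Real.log s ^ q)) :=
            mul_le_mul_of_nonneg_left hg2 hsd
        _ = C1 * (s ^ (p-1-d) * Real.log s ^ q) := by
            rw [← hkey (Real.log s ^ q)]; ring
  -- integrability of W
  have hWint : ∀ τ : ℝ, R ≤ τ → IntervalIntegrable W volume R τ := by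
    intro τ hτ
    have hBnn : 0 ≤ max 1 (Real.log (Real.exp 1 + τ) ^ q) / (p-1) :=
      div_nonneg (le_trans zero_le_one (le_max_left _ _)) (by linarith)
    have hgint : IntervalIntegrable
        (fun s : ℝ => (max 1 (Real.log (Real.exp 1 + τ) ^ q) / (p-1)) * s ^ (p-1-d))
        volume R τ :=
      (intervalIntegral.intervalIntegrable_rpow' (by linarith)).const_mul _
    apply hgint.mono_fun
    · have hGcont : ContinuousOn G (Set.uIcc R τ) := by
        apply intervalIntegral.continuousOn_primitive_interval
        rw [Set.uIcc_of_le hτ]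
        exact (intervalIntegrable_iff_integrableOn_Icc_of_le hτ).mp
          (hwint R τ hR (hR.trans hτ))
      have hcont : ContinuousOn W (Set.Ioc R τ) := by
        apply ContinuousOn.mul
        · exact continuousOn_id.rpow_const fun x hx =>
            Or.inl (ne_of_gt (lt_of_le_of_lt hR hx.1))
        · exact hGcont.mono (by rw [Set.uIcc_of_le hτ]; exact Set.Ioc_subset_Icc_self)
      rw [Set.uIoc_of_le hτ]
      exact hcont.aestronglyMeasurable measurableSet_Ioc
    · refine (ae_restrict_iff' measurableSet_uIoc).mpr (ae_of_all _ ?_)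
      intro s hs
      rw [Set.uIoc_of_le hτ] at hs
      have hsR : R < s := hs.1
      have hs0 : (0:ℝ) < s := lt_of_le_of_lt hR hsR
      have hWnn : 0 ≤ W s := mul_nonneg (Real.rpow_nonneg hs0.le _) (hGnn s hsR.le)
      have hLbound : ∀ ξ ∈ Set.Icc R s,
          w ξ ≤ max 1 (Real.log (Real.exp 1 + τ) ^ q) * ξ ^ (p-2) := by
        intro ξ hξ
        have hξ0 : (0:ℝ) ≤ ξ := hR.trans hξ.1
        have hL1 : 1 ≤ Real.log (Real.exp 1 + ξ) := by
          calc (1:ℝ) = Real.log (Real.exp 1) := (Real.log_exp 1).symm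
            _ ≤ Real.log (Real.exp 1 + ξ) :=
              Real.log_le_log (Real.exp_pos 1) (by linarith)
        have hLτ : Real.log (Real.exp 1 + ξ) ≤ Real.log (Real.exp 1 + τ) :=
          Real.log_le_log (by linarith [Real.exp_pos 1]) (by linarith [hξ.2, hs.2])
        have hwh := aux_rpow_window_high (r := q) one_pos hL1 hLτ
        rw [Real.one_rpow] at hwh
        calc w ξ = ξ ^ (p-2) * Real.log (Real.exp 1 + ξ) ^ q := rfl
          _ ≤ ξ ^ (p-2) * max 1 (Real.log (Real.exp 1 + τ) ^ q) :=
            mul_le_mul_of_nonneg_left hwh (Real.rpow_nonneg hξ0 _)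
          _ = max 1 (Real.log (Real.exp 1 + τ) ^ q) * ξ ^ (p-2) := mul_comm _ _
      have hGle : G s ≤ max 1 (Real.log (Real.exp 1 + τ) ^ q) * (s ^ (p-1) / (p-1)) := by
        calc G s ≤ ∫ ξ in R..s, max 1 (Real.log (Real.exp 1 + τ) ^ q) * ξ ^ (p-2) :=
              intervalIntegral.integral_mono_on hsR.le (hwint R s hR hs0.le)
                ((intervalIntegral.intervalIntegrable_rpow'
                  (by linarith : (-1:ℝ) < p-2)).const_mul _) hLbound
          _ = max 1 (Real.log (Real.exp 1 + τ) ^ q) * ∫ ξ in R..s, ξ ^ (p-2) :=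
              intervalIntegral.integral_const_mul _ _
          _ ≤ max 1 (Real.log (Real.exp 1 + τ) ^ q) * (s ^ (p-1) / (p-1)) := by
              apply mul_le_mul_of_nonneg_left _ (le_trans zero_le_one (le_max_left _ _))
              rw [integral_rpow (Or.inl (by linarith : (-1:ℝ) < p-2)),
                show p - 2 + 1 = p - 1 by ring]
              have hRp : 0 ≤ R ^ (p-1) := Real.rpow_nonneg hR _
              exact (div_le_div_iff_of_pos_right (by linarith)).mpr (by linarith)
      have hWle : W s ≤ (max 1 (Real.log (Real.exp 1 + τ) ^ q) / (p-1)) * s ^ (p-1-d) := by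
        calc W s = s ^ (-d) * G s := rfl
          _ ≤ s ^ (-d) * (max 1 (Real.log (Real.exp 1 + τ) ^ q) * (s ^ (p-1) / (p-1))) :=
              mul_le_mul_of_nonneg_left hGle (Real.rpow_nonneg hs0.le _)
          _ = (max 1 (Real.log (Real.exp 1 + τ) ^ q) / (p-1)) * (s ^ (-d) * s ^ (p-1)) := by
              ring
          _ = (max 1 (Real.log (Real.exp 1 + τ) ^ q) / (p-1)) * s ^ (p-1-d) := by
              rw [← Real.rpow_add hs0, show -d + (p-1) = p-1-d by ring]
      have hgnn : 0 ≤ (max 1 (Real.log (Real.exp 1 + τ) ^ q) / (p-1)) * s ^ (p-1-d) :=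
        mul_nonneg hBnn (Real.rpow_nonneg hs0.le _)
      show ‖W s‖ ≤ ‖(max 1 (Real.log (Real.exp 1 + τ) ^ q) / (p-1)) * s ^ (p-1-d)‖
      rw [Real.norm_eq_abs, Real.norm_eq_abs, abs_of_nonneg hWnn, abs_of_nonneg hgnn]
      exact hWle
  -- outer bounds
  obtain ⟨CU2, hCU2pos, hCU2ev⟩ := aux_U (p-1-d) q M1 (by linarith) hM1e
  obtain ⟨cL2, hcL2pos, hcL2ev⟩ := aux_Lo (p-1-d) q M1 (by linarith) hM1e
  have hT2 := aux_T (p-d) q (∫ s in R..M1, W s) (by linarith)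
  have hfinal : ∀ᶠ τ in atTop,
      (c1 * cL2) * (τ ^ p * Real.log τ ^ q) ≤ f τ ∧
      f τ ≤ (1 + C1 * CU2) * (τ ^ p * Real.log τ ^ q) := by
    filter_upwards [hCU2ev, hcL2ev, hT2, eventually_ge_atTop M1] with τ hU hLo hT hτM1
    rw [show p - 1 - d + 1 = p - d by ring] at hU hLo
    have hτ1 : (1:ℝ) < τ := lt_of_lt_of_le hM11 hτM1
    have hτ0 : (0:ℝ) < τ := by linarith
    have hτR : R < τ := lt_of_lt_of_le hM1R hτM1
    have hWiRτ : IntervalIntegrable W volume R τ := hWint τ hτR.le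
    have hWiRM1 : IntervalIntegrable W volume R M1 := hWint M1 hM1R.le
    have hWiM1τ : IntervalIntegrable W volume M1 τ := by
      apply hWiRτ.mono_set
      rw [Set.uIcc_of_le hτM1, Set.uIcc_of_le hτR.le]
      exact Set.Icc_subset_Icc hM1R.le le_rfl
    have hsplit : (∫ s in R..τ, W s) = (∫ s in R..M1, W s) + ∫ s in M1..τ, W s :=
      (intervalIntegral.integral_add_adjacent_intervals hWiRM1 hWiM1τ).symm
    have hmodint := aux_model_int (p-1-d) q M1 τ hM11 hτ1
    have hup2 : (∫ s in M1..τ, W s) ≤ C1 * (CU2 * (τ ^ (p-d) * Real.log τ ^ q)) := by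
      calc (∫ s in M1..τ, W s)
          ≤ ∫ s in M1..τ, C1 * (s ^ (p-1-d) * Real.log s ^ q) :=
            intervalIntegral.integral_mono_on hτM1 hWiM1τ (hmodint.const_mul C1)
              (fun s hs => (hWcomp s hs.1).2)
        _ = C1 * ∫ s in M1..τ, s ^ (p-1-d) * Real.log s ^ q :=
            intervalIntegral.integral_const_mul _ _
        _ ≤ C1 * (CU2 * (τ ^ (p-d) * Real.log τ ^ q)) :=
            mul_le_mul_of_nonneg_left hU hC1pos.le
    have hlo2 : c1 * (cL2 * (τ ^ (p-d) * Real.log τ ^ q)) ≤ ∫ s in M1..τ, W s := by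
      calc c1 * (cL2 * (τ ^ (p-d) * Real.log τ ^ q))
          ≤ c1 * ∫ s in M1..τ, s ^ (p-1-d) * Real.log s ^ q :=
            mul_le_mul_of_nonneg_left hLo hc1pos.le
        _ = ∫ s in M1..τ, c1 * (s ^ (p-1-d) * Real.log s ^ q) :=
            (intervalIntegral.integral_const_mul _ _).symm
        _ ≤ ∫ s in M1..τ, W s :=
            intervalIntegral.integral_mono_on hτM1 (hmodint.const_mul c1) hWiM1τ
              (fun s hs => (hWcomp s hs.1).1)
    have hheadnn : 0 ≤ ∫ s in R..M1, W s :=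
      intervalIntegral.integral_nonneg hM1R.le (fun s hs =>
        mul_nonneg (Real.rpow_nonneg (hR.trans hs.1) _) (hGnn s hs.1))
    have hfτ : f τ = τ ^ d * ∫ s in R..τ, W s := hf τ hτR
    have hτd : (0:ℝ) ≤ τ ^ d := Real.rpow_nonneg hτ0.le d
    have hpow : τ ^ d * τ ^ (p-d) = τ ^ p := by
      rw [← Real.rpow_add hτ0, show d + (p-d) = p by ring]
    constructor
    · calc (c1 * cL2) * (τ ^ p * Real.log τ ^ q)
          = τ ^ d * (c1 * (cL2 * (τ ^ (p-d) * Real.log τ ^ q))) := by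
            rw [← hpow]; ring
        _ ≤ τ ^ d * ∫ s in M1..τ, W s := mul_le_mul_of_nonneg_left hlo2 hτd
        _ ≤ τ ^ d * ∫ s in R..τ, W s := by
            apply mul_le_mul_of_nonneg_left _ hτd
            rw [hsplit]; linarith
        _ = f τ := hfτ.symm
    · calc f τ = τ ^ d * ∫ s in R..τ, W s := hfτ
        _ ≤ τ ^ d * ((τ ^ (p-d) * Real.log τ ^ q)
              + C1 * (CU2 * (τ ^ (p-d) * Real.log τ ^ q))) := by
            apply mul_le_mul_of_nonneg_left _ hτd
            rw [hsplit]; linarith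
        _ = (1 + C1 * CU2) * (τ ^ p * Real.log τ ^ q) := by rw [← hpow]; ring
  rw [eventually_atTop] at hfinal
  obtain ⟨M0, hM0⟩ := hfinal
  have hc12 : 0 < c1 * cL2 := mul_pos hc1pos hcL2pos
  refine ⟨max (max 1 (c1 * cL2)⁻¹) (1 + C1 * CU2),
    le_trans (le_max_left 1 _) (le_max_left _ _), ?_⟩
  refine ⟨max M0 (max (4*R) (Real.exp 1)) + 1, ?_, ?_⟩
  · have h := le_max_right M0 (max (4*R) (Real.exp 1)); linarith
  intro τ hτ
  have hτM0 : M0 ≤ τ := by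
    have h := le_max_left M0 (max (4*R) (Real.exp 1)); linarith
  obtain ⟨hlow, hupp⟩ := hM0 τ hτM0
  have hτe : Real.exp 1 ≤ τ := by
    have h1 := le_max_right (4*R) (Real.exp 1)
    have h2 := le_max_right M0 (max (4*R) (Real.exp 1)); linarith
  have hτ1 : (1:ℝ) ≤ τ := le_trans he1.le hτe
  have hXnn : 0 ≤ τ ^ p * Real.log τ ^ q :=
    mul_nonneg (Real.rpow_nonneg (by linarith) _)
      (Real.rpow_nonneg (Real.log_nonneg hτ1) _)
  constructor
  · have h1 : (c1 * cL2)⁻¹ ≤ max (max 1 (c1 * cL2)⁻¹) (1 + C1 * CU2) :=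
      le_trans (le_max_right 1 _) (le_max_left _ _)
    have h2 : (max (max 1 (c1 * cL2)⁻¹) (1 + C1 * CU2))⁻¹ ≤ c1 * cL2 := by
      have h3 := inv_anti₀ (inv_pos.mpr hc12) h1
      rwa [inv_inv] at h3
    calc (max (max 1 (c1 * cL2)⁻¹) (1 + C1 * CU2))⁻¹ * (τ ^ p * Real.log τ ^ q)
        ≤ (c1 * cL2) * (τ ^ p * Real.log τ ^ q) :=
          mul_le_mul_of_nonneg_right h2 hXnn
      _ ≤ f τ := hlow
  · calc f τ ≤ (1 + C1 * CU2) * (τ ^ p * Real.log τ ^ q) := hupp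
      _ ≤ max (max 1 (c1 * cL2)⁻¹) (1 + C1 * CU2) * (τ ^ p * Real.log τ ^ q) :=
        mul_le_mul_of_nonneg_right (le_max_right _ _) hXnn
end

section
/- Fix R > 0 and α > 0. Let G, H be positive functions on [R, ∞), G continuous and H continuously differentiable, such that: (a) for every a ≥ 1 and b > 0, G(aτ^b) ≍ G(τ) as τ → ∞; (b) H'(τ) ≍ τ⁻¹ G(τ) > 0 as τ → ∞; (c) H(τ) → ∞ as τ → ∞; (d) τ^{-δ} H(τ) → 0 as τ → ∞ for every δ > 0. Then for any a > 0 and b > 0, H(aτ^b) ≍ H(τ) as τ → ∞. -/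
/-- `Asymp f g` : `f(τ) ≍ g(τ)` as `τ → ∞`. -/
def Asymp (f g : ℝ → ℝ) : Prop :=
  ∃ C : ℝ, 0 < C ∧ ∃ M : ℝ, ∀ τ : ℝ, M ≤ τ → C⁻¹ * g τ ≤ f τ ∧ f τ ≤ C * g τ

theorem stmt_8 (R α : ℝ) (hR : 0 < R) (hα : 0 < α)
    (G H H' : ℝ → ℝ)
    (hGpos : ∀ τ ∈ Set.Ici R, 0 < G τ) (hHpos : ∀ τ ∈ Set.Ici R, 0 < H τ)
    (hGcont : ContinuousOn G (Set.Ici R))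
    (hHderiv : ∀ τ ∈ Set.Ici R, HasDerivAt H (H' τ) τ)
    (hH'cont : ContinuousOn H' (Set.Ici R))
    (ha : ∀ a : ℝ, 1 ≤ a → ∀ b : ℝ, 0 < b → Asymp (fun τ => G (a * τ ^ b)) G)
    (hb : Asymp H' (fun τ => τ⁻¹ * G τ))
    (hb' : ∃ M : ℝ, ∀ τ : ℝ, M ≤ τ → 0 < H' τ)
    (hc : Filter.Tendsto H Filter.atTop Filter.atTop)
    (hd : ∀ δ : ℝ, 0 < δ →
      Filter.Tendsto (fun τ : ℝ => τ ^ (-δ) * H τ) Filter.atTop (nhds 0)) :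
    ∀ a : ℝ, 0 < a → ∀ b : ℝ, 0 < b → Asymp (fun τ => H (a * τ ^ b)) H := by
  obtain ⟨C₁, hC₁, M₁, hM₁⟩ := hb
  obtain ⟨C₂, hC₂, M₂, hM₂⟩ := ha 1 le_rfl 2 two_pos
  obtain ⟨M₃, hM₃⟩ := hb'
  set M₀ : ℝ := max (max R M₁) (max (max M₂ M₃) 1) with hM₀def
  have hM₀R : R ≤ M₀ := le_trans (le_max_left _ _) (le_max_left _ _)
  have hM₀1 : (1:ℝ) ≤ M₀ := le_trans (le_max_right _ _) (le_max_right _ _)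
  have hM₀M₁ : M₁ ≤ M₀ := le_trans (le_max_right _ _) (le_max_left _ _)
  have hM₀M₂ : M₂ ≤ M₀ :=
    le_trans (le_trans (le_max_left _ _) (le_max_left _ _)) (le_max_right _ _)
  have hM₀M₃ : M₃ ≤ M₀ :=
    le_trans (le_trans (le_max_right _ _) (le_max_left _ _)) (le_max_right _ _)
  -- x ≤ x^2 for x ≥ 1
  have hxsq : ∀ x : ℝ, 1 ≤ x → x ≤ x ^ (2:ℝ) := by
    intro x hx
    nth_rewrite 1 [← Real.rpow_one x]
    exact Real.rpow_le_rpow_of_exponent_le hx one_le_two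
  have hHcont : ContinuousOn H (Set.Ici R) := fun x hx =>
    (hHderiv x hx).continuousAt.continuousWithinAt
  -- H is monotone on [M₀, ∞)
  have hmonoH : MonotoneOn H (Set.Ici M₀) := by
    apply monotoneOn_of_hasDerivWithinAt_nonneg (convex_Ici M₀)
      (hHcont.mono (Set.Ici_subset_Ici.2 hM₀R)) (f' := H')
    · intro x hx
      rw [interior_Ici] at hx
      exact (hHderiv x (le_trans hM₀R (le_of_lt hx))).hasDerivWithinAt
    · intro x hx
      rw [interior_Ici] at hx
      exact le_of_lt (hM₃ x (le_trans hM₀M₃ (le_of_lt hx)))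
  set c : ℝ := 2 * C₁ ^ 2 * C₂ with hcdef
  have hcpos : 0 < c := by positivity
  -- the auxiliary function φ u = c * H u - H (u^2) is monotone on [M₀, ∞)
  set φ : ℝ → ℝ := fun u => c * H u - H (u ^ (2:ℝ)) with hφdef
  have hφmono : MonotoneOn φ (Set.Ici M₀) := by
    apply monotoneOn_of_hasDerivWithinAt_nonneg (convex_Ici M₀)
      (f' := fun x => c * H' x - H' (x ^ (2:ℝ)) * (2 * x ^ (2 - 1 : ℝ)))
    · apply ContinuousOn.sub
      · exact continuousOn_const.mul (hHcont.mono (Set.Ici_subset_Ici.2 hM₀R))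
      · refine ContinuousOn.comp hHcont ?_ ?_
        · intro x hx
          have hx0 : x ≠ 0 := ne_of_gt (lt_of_lt_of_le one_pos (le_trans hM₀1 hx))
          exact (Real.continuousAt_rpow_const x 2 (Or.inl hx0)).continuousWithinAt
        · intro x hx
          exact le_trans hM₀R (le_trans hx (hxsq x (le_trans hM₀1 hx)))
    · intro x hx
      rw [interior_Ici] at hx
      have hx1 : (1:ℝ) ≤ x := le_trans hM₀1 (le_of_lt hx)
      have hx0 : (0:ℝ) < x := lt_of_lt_of_le one_pos hx1
      have hx2R : R ≤ x ^ (2:ℝ) :=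
        le_trans hM₀R (le_trans (le_of_lt hx) (hxsq x hx1))
      have h2 : HasDerivAt (fun u : ℝ => u ^ (2:ℝ)) (2 * x ^ (2 - 1 : ℝ)) x :=
        Real.hasDerivAt_rpow_const (Or.inl (ne_of_gt hx0))
      have hcomp : HasDerivAt (fun u : ℝ => H (u ^ (2:ℝ)))
          (H' (x ^ (2:ℝ)) * (2 * x ^ (2 - 1 : ℝ))) x :=
        HasDerivAt.comp x (hHderiv _ hx2R) h2
      exact (((hHderiv x (le_trans hM₀R (le_of_lt hx))).const_mul c).sub hcomp).hasDerivWithinAt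
    · intro x hx
      rw [interior_Ici] at hx
      have hx1 : (1:ℝ) ≤ x := le_trans hM₀1 (le_of_lt hx)
      have hx0 : (0:ℝ) < x := lt_of_lt_of_le one_pos hx1
      have hx2x : x ≤ x ^ (2:ℝ) := hxsq x hx1
      have hx2eq : x ^ (2:ℝ) = x * x := by
        rw [show (2:ℝ) = ((2:ℕ):ℝ) by norm_num, Real.rpow_natCast, pow_two]
      have hxR : R ≤ x := le_trans hM₀R (le_of_lt hx)
      have hx2R : R ≤ x ^ (2:ℝ) := le_trans hxR hx2x
      have hGx : 0 < G x := hGpos x hxR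
      have hGx2 : 0 < G (x ^ (2:ℝ)) := hGpos _ hx2R
      have e1 : H' (x ^ (2:ℝ)) ≤ C₁ * ((x ^ (2:ℝ))⁻¹ * G (x ^ (2:ℝ))) :=
        (hM₁ _ (le_trans hM₀M₁ (le_trans (le_of_lt hx) hx2x))).2
      have e2 : G (1 * x ^ (2:ℝ)) ≤ C₂ * G x :=
        (hM₂ x (le_trans hM₀M₂ (le_of_lt hx))).2
      rw [one_mul] at e2
      have e3 : C₁⁻¹ * (x⁻¹ * G x) ≤ H' x :=
        (hM₁ x (le_trans hM₀M₁ (le_of_lt hx))).1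
      have key : H' (x ^ (2:ℝ)) * (2 * x ^ (2 - 1 : ℝ)) ≤ c * H' x := by
        have h21 : x ^ (2 - 1 : ℝ) = x := by norm_num
        rw [h21, hx2eq]
        rw [hx2eq] at e1 e2
        calc H' (x * x) * (2 * x)
            ≤ (C₁ * ((x * x)⁻¹ * (C₂ * G x))) * (2 * x) := by
              apply mul_le_mul_of_nonneg_right _ (by positivity)
              exact le_trans e1 (mul_le_mul_of_nonneg_left
                (mul_le_mul_of_nonneg_left e2 (by positivity)) (le_of_lt hC₁))
          _ = c * (C₁⁻¹ * (x⁻¹ * G x)) := by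
              field_simp
              rw [hcdef]; ring
          _ ≤ c * H' x := mul_le_mul_of_nonneg_left e3 (le_of_lt hcpos)
      linarith [key]
  -- doubling inequality
  obtain ⟨M₄, hM₄⟩ := Filter.eventually_atTop.1 (hc.eventually_ge_atTop (-(φ M₀)))
  set Cd : ℝ := c + 1 with hCddef
  have hCd1 : (1:ℝ) ≤ Cd := by linarith
  have hCdpos : (0:ℝ) < Cd := lt_of_lt_of_le one_pos hCd1
  set M : ℝ := max M₀ M₄ with hMdef
  have hMM₀ : M₀ ≤ M := le_max_left _ _
  have hM1 : (1:ℝ) ≤ M := le_trans hM₀1 hMM₀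
  have hMR : R ≤ M := le_trans hM₀R hMM₀
  have hdouble : ∀ τ : ℝ, M ≤ τ → H (τ ^ (2:ℝ)) ≤ Cd * H τ := by
    intro τ hτ
    have hτM₀ : M₀ ≤ τ := le_trans hMM₀ hτ
    have h1 : φ M₀ ≤ φ τ := hφmono Set.self_mem_Ici hτM₀ hτM₀
    have h2 : -(φ M₀) ≤ H τ := hM₄ τ (le_trans (le_max_right _ _) hτ)
    simp only [hφdef] at h1
    have hφe : φ M₀ = c * H M₀ - H (M₀ ^ (2:ℝ)) := rfl
    have : H (τ ^ (2:ℝ)) ≤ c * H τ - φ M₀ := by rw [hφe]; linarith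
    calc H (τ ^ (2:ℝ)) ≤ c * H τ - φ M₀ := this
      _ ≤ c * H τ + H τ := by linarith
      _ = Cd * H τ := by ring
  -- iterated doubling
  have hiter : ∀ n : ℕ, ∀ τ : ℝ, M ≤ τ → H (τ ^ ((2:ℝ) ^ n)) ≤ Cd ^ n * H τ := by
    intro n
    induction n with
    | zero => intro τ hτ; simp [Real.rpow_one]
    | succ n ih =>
      intro τ hτ
      have hτ1 : (1:ℝ) ≤ τ := le_trans hM1 hτ
      have hτ0 : (0:ℝ) ≤ τ := le_trans zero_le_one hτ1
      have h1 : τ ^ ((2:ℝ) ^ (n+1)) = (τ ^ ((2:ℝ) ^ n)) ^ (2:ℝ) := by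
        rw [← Real.rpow_mul hτ0, pow_succ]
      have h2 : τ ≤ τ ^ ((2:ℝ) ^ n) := by
        nth_rewrite 1 [← Real.rpow_one τ]
        exact Real.rpow_le_rpow_of_exponent_le hτ1 (one_le_pow₀ one_le_two)
      have h3 : M ≤ τ ^ ((2:ℝ) ^ n) := le_trans hτ h2
      calc H (τ ^ ((2:ℝ) ^ (n+1))) = H ((τ ^ ((2:ℝ) ^ n)) ^ (2:ℝ)) := by rw [h1]
        _ ≤ Cd * H (τ ^ ((2:ℝ) ^ n)) := hdouble _ h3
        _ ≤ Cd * (Cd ^ n * H τ) :=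
            mul_le_mul_of_nonneg_left (ih τ hτ) (le_of_lt hCdpos)
        _ = Cd ^ (n+1) * H τ := by ring
  -- main argument
  intro a ha' b hb''
  obtain ⟨n, hn⟩ := pow_unbounded_of_one_lt (max (b + 1) (2 / b)) one_lt_two
  have hnb : b + 1 ≤ (2:ℝ) ^ n := le_of_lt (lt_of_le_of_lt (le_max_left _ _) hn)
  have hnb2 : 2 / b < (2:ℝ) ^ n := lt_of_le_of_lt (le_max_right _ _) hn
  set ε : ℝ := ((2:ℝ) ^ n)⁻¹ with hεdef
  have h2npos : (0:ℝ) < (2:ℝ) ^ n := by positivity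
  have hεpos : 0 < ε := by positivity
  have hεb : ε < b := by
    have hb2 : b / 2 ≤ b := by linarith
    have : ε < b / 2 := by
      rw [hεdef, inv_lt_comm₀ h2npos (by linarith)]
      calc (b / 2)⁻¹ = 2 / b := by field_simp
        _ < (2:ℝ) ^ n := hnb2
    linarith
  set D : ℝ := Cd ^ n with hDdef
  have hDpos : (0:ℝ) < D := by positivity
  have t1 : Filter.Tendsto (fun τ : ℝ => a * τ ^ b) Filter.atTop Filter.atTop :=
    (tendsto_rpow_atTop hb'').const_mul_atTop ha'
  have t2 : Filter.Tendsto (fun τ : ℝ => a * τ ^ (b - ε)) Filter.atTop Filter.atTop :=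
    (tendsto_rpow_atTop (by linarith)).const_mul_atTop ha'
  have t3 : Filter.Tendsto (fun τ : ℝ => τ ^ ε) Filter.atTop Filter.atTop :=
    tendsto_rpow_atTop hεpos
  have ev : ∀ᶠ τ : ℝ in Filter.atTop,
      (M ≤ τ ∧ a ≤ τ ∧ 1 ≤ τ) ∧ M ≤ a * τ ^ b ∧ 1 ≤ a * τ ^ (b - ε) ∧ M ≤ τ ^ ε := by
    filter_upwards [Filter.eventually_ge_atTop M, Filter.eventually_ge_atTop a,
      Filter.eventually_ge_atTop 1, t1.eventually_ge_atTop M,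
      t2.eventually_ge_atTop 1, t3.eventually_ge_atTop M] with τ e1 e2 e3 e4 e5 e6
    exact ⟨⟨e1, e2, e3⟩, e4, e5, e6⟩
  obtain ⟨M', hM'⟩ := Filter.eventually_atTop.1 ev
  refine ⟨D, hDpos, M', fun τ hτ => ?_⟩
  obtain ⟨⟨h1, h2, h3⟩, h4, h5, h6⟩ := hM' τ hτ
  have hτ0 : (0:ℝ) < τ := lt_of_lt_of_le one_pos h3
  have hmemM₀ : ∀ x : ℝ, M ≤ x → x ∈ Set.Ici M₀ := fun x hx =>
    le_trans hMM₀ hx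
  constructor
  · -- lower bound
    have hτε : τ ^ ε ≤ a * τ ^ b := by
      have hsplit : τ ^ b = τ ^ (b - ε) * τ ^ ε := by
        rw [← Real.rpow_add hτ0]; ring_nf
      calc τ ^ ε = 1 * τ ^ ε := (one_mul _).symm
        _ ≤ (a * τ ^ (b - ε)) * τ ^ ε :=
            mul_le_mul_of_nonneg_right h5 (Real.rpow_nonneg (le_of_lt hτ0) ε)
        _ = a * τ ^ b := by rw [hsplit]; ring
    have heq : (τ ^ ε) ^ ((2:ℝ) ^ n) = τ := by
      rw [← Real.rpow_mul (le_of_lt hτ0), hεdef,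
        inv_mul_cancel₀ (ne_of_gt h2npos), Real.rpow_one]
    have hHτ : H τ ≤ D * H (τ ^ ε) := by
      have := hiter n (τ ^ ε) h6
      rwa [heq] at this
    have hmono' : H (τ ^ ε) ≤ H (a * τ ^ b) :=
      hmonoH (hmemM₀ _ h6) (hmemM₀ _ h4) hτε
    calc D⁻¹ * H τ ≤ D⁻¹ * (D * H (τ ^ ε)) :=
          mul_le_mul_of_nonneg_left hHτ (by positivity)
      _ = H (τ ^ ε) := by field_simp
      _ ≤ H (a * τ ^ b) := hmono'
  · -- upper bound
    have hub : a * τ ^ b ≤ τ ^ ((2:ℝ) ^ n) := by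
      calc a * τ ^ b ≤ τ * τ ^ b :=
            mul_le_mul_of_nonneg_right h2 (Real.rpow_nonneg (le_of_lt hτ0) b)
        _ = τ ^ (1 + b) := by rw [Real.rpow_add hτ0, Real.rpow_one]
        _ ≤ τ ^ ((2:ℝ) ^ n) :=
            Real.rpow_le_rpow_of_exponent_le h3 (by linarith)
    calc H (a * τ ^ b) ≤ H (τ ^ ((2:ℝ) ^ n)) :=
          hmonoH (hmemM₀ _ h4) (hmemM₀ _ (le_trans h4 hub)) hub
      _ ≤ D * H τ := hiter n τ h1
end

section
/- Fix R > 0 and α > 0. Let G, H be positive functions on [R, ∞) satisfying the hypotheses: for every a ≥ 1 and b > 0, G(aτ^b) ≍ G(τ) as τ → ∞; H'(τ) ≍ τ⁻¹G(τ) > 0 as τ → ∞; H(τ) → ∞; and τ^{-δ}H(τ) → 0 for every δ > 0. Then for any b > 0 and c ∈ ℝ, H(τ^b H(τ)^c) ≍ H(τ) as τ → ∞. -/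
open Real Filter Set

lemma asymp_iff {f g : ℝ → ℝ} :
    Asymp f g ↔ ∃ C, 0 < C ∧ ∀ᶠ τ in Filter.atTop, C⁻¹ * g τ ≤ f τ ∧ f τ ≤ C * g τ := by
  simp [Asymp, Filter.eventually_atTop]

lemma mono_of_deriv (κ : ℝ) (F F' : ℝ → ℝ)
    (hd : ∀ τ ∈ Set.Ici κ, HasDerivAt F (F' τ) τ)
    (hpos : ∀ τ ∈ Set.Ici κ, 0 ≤ F' τ) :
    ∀ τ, κ ≤ τ → F κ ≤ F τ := by
  intro τ hτ
  have hmono := monotoneOn_of_deriv_nonneg (convex_Ici κ)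
    (fun x hx => (hd x hx).continuousAt.continuousWithinAt)
    (fun x hx => ((hd x (interior_subset hx)).differentiableAt).differentiableWithinAt)
    (fun x hx => by
      rw [(hd x (interior_subset hx)).deriv]; exact hpos x (interior_subset hx))
  exact hmono (Set.mem_Ici.mpr le_rfl) (Set.mem_Ici.mpr hτ) hτ

lemma keyA (R : ℝ) (G H H' : ℝ → ℝ)
    (hGpos : ∀ τ ∈ Set.Ici R, 0 < G τ) (hHpos : ∀ τ ∈ Set.Ici R, 0 < H τ)
    (hHderiv : ∀ τ ∈ Set.Ici R, HasDerivAt H (H' τ) τ)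
    (hb : Asymp H' (fun τ => τ⁻¹ * G τ))
    (hc : Filter.Tendsto H Filter.atTop Filter.atTop)
    (s : ℝ) (hs : 0 < s)
    (hGs : Asymp (fun τ => G (τ ^ s)) G) :
    Asymp (fun τ => H (τ ^ s)) H := by
  obtain ⟨Cb, hCb, hbE⟩ := asymp_iff.mp hb
  obtain ⟨Ca, hCa, haE⟩ := asymp_iff.mp hGs
  have hpow : Filter.Tendsto (fun τ : ℝ => τ ^ s) Filter.atTop Filter.atTop :=
    tendsto_rpow_atTop hs
  -- collect eventual facts
  have hbig : ∀ᶠ τ in Filter.atTop,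
      (Cb⁻¹ * (τ⁻¹ * G τ) ≤ H' τ ∧ H' τ ≤ Cb * (τ⁻¹ * G τ)) ∧
      (Cb⁻¹ * ((τ ^ s)⁻¹ * G (τ ^ s)) ≤ H' (τ ^ s) ∧
        H' (τ ^ s) ≤ Cb * ((τ ^ s)⁻¹ * G (τ ^ s))) ∧
      (Ca⁻¹ * G τ ≤ G (τ ^ s) ∧ G (τ ^ s) ≤ Ca * G τ) ∧
      R ≤ τ ∧ R ≤ τ ^ s ∧ 1 ≤ τ := by
    filter_upwards [hbE, hpow.eventually hbE, haE,
      Filter.eventually_ge_atTop R, hpow.eventually (Filter.eventually_ge_atTop R),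
      Filter.eventually_ge_atTop (1:ℝ)] with τ h1 h2 h3 h4 h5 h6
    exact ⟨h1, h2, h3, h4, h5, h6⟩
  obtain ⟨M0, hM0⟩ := Filter.eventually_atTop.mp hbig
  set c2 : ℝ := s * (Cb * Cb * Ca) with hc2def
  set c1 : ℝ := s / (Cb * Cb * Ca) with hc1def
  have hc2 : 0 < c2 := by positivity
  have hc1 : 0 < c1 := by positivity
  -- derivative bounds
  have claim : ∀ τ : ℝ, M0 ≤ τ →
      c1 * H' τ ≤ H' (τ ^ s) * (s * τ ^ (s - 1)) ∧
      H' (τ ^ s) * (s * τ ^ (s - 1)) ≤ c2 * H' τ := by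
    intro τ hτ
    obtain ⟨⟨f1, f2⟩, ⟨f3, f4⟩, ⟨f5, f6⟩, hτR, hτsR, hτ1⟩ := hM0 τ hτ
    have hτpos : (0:ℝ) < τ := lt_of_lt_of_le one_pos hτ1
    have hupos : (0:ℝ) < τ ^ s := Real.rpow_pos_of_pos hτpos s
    have e : τ ^ (s - 1) = τ ^ s * τ⁻¹ := by
      rw [Real.rpow_sub hτpos, Real.rpow_one]; ring
    have hGτ : 0 < G τ := hGpos τ hτR
    have hGu : 0 < G (τ ^ s) := hGpos _ hτsR
    -- cleaned facts
    have g1 : τ⁻¹ * G τ ≤ Cb * H' τ := by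
      have := mul_le_mul_of_nonneg_left f1 hCb.le
      calc τ⁻¹ * G τ = Cb * (Cb⁻¹ * (τ⁻¹ * G τ)) := by
            field_simp
        _ ≤ Cb * H' τ := this
    have g2 : Cb⁻¹ * H' τ ≤ τ⁻¹ * G τ := by
      have := mul_le_mul_of_nonneg_left f2 (inv_pos.mpr hCb).le
      calc Cb⁻¹ * H' τ ≤ Cb⁻¹ * (Cb * (τ⁻¹ * G τ)) := this
        _ = τ⁻¹ * G τ := by field_simp
    have g3 : H' (τ ^ s) * τ ^ s ≤ Cb * G (τ ^ s) := by
      have := mul_le_mul_of_nonneg_right f4 hupos.le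
      calc H' (τ ^ s) * τ ^ s ≤ Cb * ((τ ^ s)⁻¹ * G (τ ^ s)) * τ ^ s := this
        _ = Cb * G (τ ^ s) := by field_simp
    have g4 : Cb⁻¹ * G (τ ^ s) ≤ H' (τ ^ s) * τ ^ s := by
      have := mul_le_mul_of_nonneg_right f3 hupos.le
      calc Cb⁻¹ * G (τ ^ s) = Cb⁻¹ * ((τ ^ s)⁻¹ * G (τ ^ s)) * τ ^ s := by
            field_simp
        _ ≤ H' (τ ^ s) * τ ^ s := this
    have hsτ : (0:ℝ) ≤ s * τ⁻¹ := by positivity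
    constructor
    · -- lower bound
      have step1 : Cb⁻¹ * (Ca⁻¹ * G τ) * (s * τ⁻¹) ≤ (H' (τ ^ s) * τ ^ s) * (s * τ⁻¹) := by
        apply mul_le_mul_of_nonneg_right _ hsτ
        calc Cb⁻¹ * (Ca⁻¹ * G τ) ≤ Cb⁻¹ * G (τ ^ s) :=
              mul_le_mul_of_nonneg_left f5 (inv_pos.mpr hCb).le
          _ ≤ H' (τ ^ s) * τ ^ s := g4
      have step2 : c1 * H' τ ≤ Cb⁻¹ * (Ca⁻¹ * G τ) * (s * τ⁻¹) := by
        have h3 : c1 * H' τ = (s * (Cb⁻¹ * Ca⁻¹)) * (Cb⁻¹ * H' τ) := by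
          rw [hc1def, div_eq_mul_inv, mul_inv, mul_inv]
          ring
        rw [h3]
        have := mul_le_mul_of_nonneg_left g2 (by positivity : (0:ℝ) ≤ s * (Cb⁻¹ * Ca⁻¹))
        calc (s * (Cb⁻¹ * Ca⁻¹)) * (Cb⁻¹ * H' τ) ≤ (s * (Cb⁻¹ * Ca⁻¹)) * (τ⁻¹ * G τ) := this
          _ = Cb⁻¹ * (Ca⁻¹ * G τ) * (s * τ⁻¹) := by ring
      calc c1 * H' τ ≤ Cb⁻¹ * (Ca⁻¹ * G τ) * (s * τ⁻¹) := step2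
        _ ≤ (H' (τ ^ s) * τ ^ s) * (s * τ⁻¹) := step1
        _ = H' (τ ^ s) * (s * τ ^ (s - 1)) := by rw [e]; ring
    · -- upper bound
      have step1 : (H' (τ ^ s) * τ ^ s) * (s * τ⁻¹) ≤ Cb * (Ca * G τ) * (s * τ⁻¹) := by
        apply mul_le_mul_of_nonneg_right _ hsτ
        calc H' (τ ^ s) * τ ^ s ≤ Cb * G (τ ^ s) := g3
          _ ≤ Cb * (Ca * G τ) := mul_le_mul_of_nonneg_left f6 hCb.le
      have step2 : Cb * (Ca * G τ) * (s * τ⁻¹) ≤ c2 * H' τ := by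
        have := mul_le_mul_of_nonneg_left g1 (by positivity : (0:ℝ) ≤ s * (Cb * Ca))
        calc Cb * (Ca * G τ) * (s * τ⁻¹) = (s * (Cb * Ca)) * (τ⁻¹ * G τ) := by ring
          _ ≤ (s * (Cb * Ca)) * (Cb * H' τ) := this
          _ = c2 * H' τ := by rw [hc2def]; ring
      calc H' (τ ^ s) * (s * τ ^ (s - 1)) = (H' (τ ^ s) * τ ^ s) * (s * τ⁻¹) := by
            rw [e]; ring
        _ ≤ Cb * (Ca * G τ) * (s * τ⁻¹) := step1
        _ ≤ c2 * H' τ := step2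
  -- derivative of τ ↦ H (τ ^ s) on [M0, ∞)
  have hcomp : ∀ τ : ℝ, M0 ≤ τ →
      HasDerivAt (fun τ : ℝ => H (τ ^ s)) (H' (τ ^ s) * (s * τ ^ (s - 1))) τ := by
    intro τ hτ
    obtain ⟨_, _, _, hτR, hτsR, hτ1⟩ := hM0 τ hτ
    have hτne : τ ≠ 0 := by positivity
    exact (hHderiv (τ ^ s) hτsR).comp τ (Real.hasDerivAt_rpow_const (Or.inl hτne))
  -- upper: c2 * H - H∘(·^s) nondecreasing on [M0,∞)
  have upper : ∀ τ, M0 ≤ τ → H (τ ^ s) ≤ c2 * H τ + (H (M0 ^ s) - c2 * H M0) := by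
    have := mono_of_deriv M0 (fun τ => c2 * H τ - H (τ ^ s))
      (fun τ => c2 * H' τ - H' (τ ^ s) * (s * τ ^ (s - 1)))
      (fun τ hτ => by
        obtain ⟨_, _, _, hτR, _, _⟩ := hM0 τ hτ
        exact ((hHderiv τ hτR).const_mul c2).sub (hcomp τ hτ))
      (fun τ hτ => sub_nonneg.mpr (claim τ hτ).2)
    intro τ hτ
    have h2 : c2 * H M0 - H (M0 ^ s) ≤ c2 * H τ - H (τ ^ s) := this τ hτ
    linarith
  -- lower: H∘(·^s) - c1 * H nondecreasing on [M0,∞)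
  have lower : ∀ τ, M0 ≤ τ → c1 * H τ - (c1 * H M0 - H (M0 ^ s)) ≤ H (τ ^ s) := by
    have := mono_of_deriv M0 (fun τ => H (τ ^ s) - c1 * H τ)
      (fun τ => H' (τ ^ s) * (s * τ ^ (s - 1)) - c1 * H' τ)
      (fun τ hτ => by
        obtain ⟨_, _, _, hτR, _, _⟩ := hM0 τ hτ
        exact (hcomp τ hτ).sub ((hHderiv τ hτR).const_mul c1))
      (fun τ hτ => sub_nonneg.mpr (claim τ hτ).1)
    intro τ hτ
    have h2 : H (M0 ^ s) - c1 * H M0 ≤ H (τ ^ s) - c1 * H τ := this τ hτ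
    linarith
  -- conclude
  set K : ℝ := H (M0 ^ s) - c2 * H M0
  set K' : ℝ := c1 * H M0 - H (M0 ^ s)
  clear_value c1 c2 K K'
  rw [asymp_iff]
  refine ⟨max (c2 + 1) (2 / c1), lt_of_lt_of_le (by positivity) (le_max_left _ _), ?_⟩
  filter_upwards [Filter.eventually_ge_atTop M0, Filter.eventually_ge_atTop R,
    hc.eventually_ge_atTop K, hc.eventually_ge_atTop (2 * K' / c1)] with τ hτ hτR hK hK'
  have hHτ : 0 < H τ := hHpos τ hτR
  constructor
  · -- lower
    have h1 : c1 * H τ - K' ≤ H (τ ^ s) := lower τ hτ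
    have h2 : K' ≤ c1 / 2 * H τ := by
      have := mul_le_mul_of_nonneg_left hK' (by positivity : (0:ℝ) ≤ c1 / 2)
      calc K' = c1 / 2 * (2 * K' / c1) := by field_simp
        _ ≤ c1 / 2 * H τ := this
    have h3 : c1 / 2 * H τ ≤ H (τ ^ s) := by
      have hx : c1 * H τ - c1 / 2 * H τ = c1 / 2 * H τ := by ring
      linarith
    have h4 : (max (c2 + 1) (2 / c1))⁻¹ ≤ c1 / 2 := by
      rw [show c1 / 2 = (2 / c1)⁻¹ by rw [inv_div]]
      exact inv_anti₀ (by positivity) (le_max_right _ _)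
    calc (max (c2 + 1) (2 / c1))⁻¹ * H τ ≤ c1 / 2 * H τ :=
          mul_le_mul_of_nonneg_right h4 hHτ.le
      _ ≤ H (τ ^ s) := h3
  · -- upper
    have h1 : H (τ ^ s) ≤ c2 * H τ + K := upper τ hτ
    calc H (τ ^ s) ≤ c2 * H τ + K := h1
      _ ≤ c2 * H τ + H τ := by linarith
      _ = (c2 + 1) * H τ := by ring
      _ ≤ max (c2 + 1) (2 / c1) * H τ :=
          mul_le_mul_of_nonneg_right (le_max_left _ _) hHτ.le

theorem stmt_9 (R α : ℝ) (hR : 0 < R) (hα : 0 < α)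
    (G H H' : ℝ → ℝ)
    (hGpos : ∀ τ ∈ Set.Ici R, 0 < G τ) (hHpos : ∀ τ ∈ Set.Ici R, 0 < H τ)
    (hGcont : ContinuousOn G (Set.Ici R))
    (hHderiv : ∀ τ ∈ Set.Ici R, HasDerivAt H (H' τ) τ)
    (hH'cont : ContinuousOn H' (Set.Ici R))
    (ha : ∀ a : ℝ, 1 ≤ a → ∀ b : ℝ, 0 < b → Asymp (fun τ => G (a * τ ^ b)) G)
    (hb : Asymp H' (fun τ => τ⁻¹ * G τ))
    (hb' : ∃ M : ℝ, ∀ τ : ℝ, M ≤ τ → 0 < H' τ)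
    (hc : Filter.Tendsto H Filter.atTop Filter.atTop)
    (hd : ∀ δ : ℝ, 0 < δ →
      Filter.Tendsto (fun τ : ℝ => τ ^ (-δ) * H τ) Filter.atTop (nhds 0)) :
    ∀ b : ℝ, 0 < b → ∀ c : ℝ, Asymp (fun τ => H (τ ^ b * H τ ^ c)) H := by
  intro b hbpos c
  have hGs : ∀ s : ℝ, 0 < s → Asymp (fun τ => G (τ ^ s)) G := by
    intro s hs
    have := ha 1 le_rfl s hs
    simpa using this
  -- the two key instances
  have A1 := keyA R G H H' hGpos hHpos hHderiv hb hc (b / 2) (by positivity)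
    (hGs _ (by positivity))
  have A2 := keyA R G H H' hGpos hHpos hHderiv hb hc (2 * b) (by positivity)
    (hGs _ (by positivity))
  obtain ⟨C1, hC1, h1E⟩ := asymp_iff.mp A1
  obtain ⟨C2, hC2, h2E⟩ := asymp_iff.mp A2
  -- eventual monotonicity of H
  obtain ⟨Mp, hMp⟩ := hb'
  set M1 : ℝ := max Mp R with hM1def
  have hmono : ∀ x y : ℝ, M1 ≤ x → x ≤ y → H x ≤ H y := by
    intro x y hx hxy
    have := mono_of_deriv x H H'
      (fun τ hτ => hHderiv τ (le_trans (le_trans (le_max_right Mp R) hx) hτ))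
      (fun τ hτ => (hMp τ (le_trans (le_trans (le_max_left Mp R) hx) hτ)).le)
    exact this y hxy
  -- eventual sandwich for τ^b * H τ^c
  have sandwich : ∀ᶠ τ in Filter.atTop,
      τ ^ (b / 2) ≤ τ ^ b * H τ ^ c ∧ τ ^ b * H τ ^ c ≤ τ ^ (2 * b) := by
    -- upper: H τ ^ c ≤ τ ^ b ; lower: τ ^ (-(b/2)) ≤ H τ ^ c
    have hupper : ∀ᶠ τ in Filter.atTop, H τ ^ c ≤ τ ^ b := by
      rcases le_or_gt c 0 with hcle | hcpos
      · filter_upwards [hc.eventually_ge_atTop 1, Filter.eventually_ge_atTop (1:ℝ)]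
          with τ hHτ hτ1
        calc H τ ^ c ≤ 1 := Real.rpow_le_one_of_one_le_of_nonpos hHτ hcle
          _ = (1:ℝ) ^ b := (Real.one_rpow b).symm
          _ ≤ τ ^ b := Real.rpow_le_rpow zero_le_one hτ1 hbpos.le
      · have hδ : 0 < b / c := by positivity
        have := (hd (b / c) hδ).eventually (gt_mem_nhds one_pos)
        filter_upwards [this, Filter.eventually_ge_atTop (1:ℝ),
          hc.eventually_ge_atTop 1] with τ hlt hτ1 hHτ1
        have hτpos : (0:ℝ) < τ := lt_of_lt_of_le one_pos hτ1
        have hppos : (0:ℝ) < τ ^ (b / c) := Real.rpow_pos_of_pos hτpos _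
        have hHle : H τ ≤ τ ^ (b / c) := by
          have : τ ^ (-(b / c)) * H τ < 1 := hlt
          rw [Real.rpow_neg hτpos.le] at this
          have := (inv_mul_lt_iff₀ hppos).mp this
          linarith [this]
        calc H τ ^ c ≤ (τ ^ (b / c)) ^ c :=
              Real.rpow_le_rpow (by linarith) hHle hcpos.le
          _ = τ ^ (b / c * c) := by rw [← Real.rpow_mul hτpos.le]
          _ = τ ^ b := by rw [div_mul_cancel₀ b (ne_of_gt hcpos)]
    have hlower : ∀ᶠ τ in Filter.atTop, τ ^ (-(b / 2)) ≤ H τ ^ c := by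
      rcases le_or_gt 0 c with hcge | hcneg
      · filter_upwards [hc.eventually_ge_atTop 1, Filter.eventually_ge_atTop (1:ℝ)]
          with τ hHτ hτ1
        calc τ ^ (-(b / 2)) ≤ 1 :=
              Real.rpow_le_one_of_one_le_of_nonpos hτ1 (by linarith)
          _ = (1:ℝ) ^ c := (Real.one_rpow c).symm
          _ ≤ H τ ^ c := Real.rpow_le_rpow zero_le_one hHτ hcge
      · have hδ : 0 < (b / 2) / (-c) := div_pos (by positivity) (by linarith)
        have := (hd ((b / 2) / (-c)) hδ).eventually (gt_mem_nhds one_pos)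
        filter_upwards [this, Filter.eventually_ge_atTop (1:ℝ),
          Filter.eventually_ge_atTop R] with τ hlt hτ1 hτR
        have hτpos : (0:ℝ) < τ := lt_of_lt_of_le one_pos hτ1
        have hppos : (0:ℝ) < τ ^ ((b / 2) / (-c)) := Real.rpow_pos_of_pos hτpos _
        have hHpos' : 0 < H τ := hHpos τ hτR
        have hHle : H τ ≤ τ ^ ((b / 2) / (-c)) := by
          have : τ ^ (-((b / 2) / (-c))) * H τ < 1 := hlt
          rw [Real.rpow_neg hτpos.le] at this
          have := (inv_mul_lt_iff₀ hppos).mp this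
          linarith [this]
        calc τ ^ (-(b / 2)) = (τ ^ ((b / 2) / (-c))) ^ c := by
              rw [← Real.rpow_mul hτpos.le]
              congr 1
              have hcne : c ≠ 0 := ne_of_lt hcneg
              field_simp
          _ ≤ H τ ^ c := Real.rpow_le_rpow_of_nonpos hHpos' hHle hcneg.le
    filter_upwards [hupper, hlower, Filter.eventually_ge_atTop (1:ℝ)] with τ hu hl hτ1
    have hτpos : (0:ℝ) < τ := lt_of_lt_of_le one_pos hτ1
    have hbpos' : (0:ℝ) < τ ^ b := Real.rpow_pos_of_pos hτpos b
    constructor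
    · calc τ ^ (b / 2) = τ ^ b * τ ^ (-(b / 2)) := by
            rw [← Real.rpow_add hτpos]; congr 1; ring
        _ ≤ τ ^ b * H τ ^ c := mul_le_mul_of_nonneg_left hl hbpos'.le
    · calc τ ^ b * H τ ^ c ≤ τ ^ b * τ ^ b := mul_le_mul_of_nonneg_left hu hbpos'.le
        _ = τ ^ (2 * b) := by rw [← Real.rpow_add hτpos]; congr 1; ring
  rw [asymp_iff]
  refine ⟨max C1 C2, lt_max_of_lt_left hC1, ?_⟩
  have hhalf : Filter.Tendsto (fun τ : ℝ => τ ^ (b / 2)) Filter.atTop Filter.atTop :=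
    tendsto_rpow_atTop (by positivity)
  filter_upwards [sandwich, h1E, h2E, hhalf.eventually_ge_atTop M1,
    Filter.eventually_ge_atTop R] with τ ⟨hs1, hs2⟩ h1 h2 hM1 hτR
  have hHτ : 0 < H τ := hHpos τ hτR
  have key1 : H (τ ^ (b / 2)) ≤ H (τ ^ b * H τ ^ c) := hmono _ _ hM1 hs1
  have key2 : H (τ ^ b * H τ ^ c) ≤ H (τ ^ (2 * b)) :=
    hmono _ _ (le_trans hM1 hs1) hs2
  constructor
  · have : (max C1 C2)⁻¹ ≤ C1⁻¹ := inv_anti₀ hC1 (le_max_left _ _)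
    calc (max C1 C2)⁻¹ * H τ ≤ C1⁻¹ * H τ := mul_le_mul_of_nonneg_right this hHτ.le
      _ ≤ H (τ ^ (b / 2)) := h1.1
      _ ≤ H (τ ^ b * H τ ^ c) := key1
  · calc H (τ ^ b * H τ ^ c) ≤ H (τ ^ (2 * b)) := key2
      _ ≤ C2 * H τ := h2.2
      _ ≤ max C1 C2 * H τ := mul_le_mul_of_nonneg_right (le_max_right _ _) hHτ.le
end

section
/- Fix R > 0 and α > 0, and let G, H satisfy: for every a ≥ 1, b > 0, G(aτ^b) ≍ G(τ); H'(τ) ≍ τ⁻¹G(τ) > 0; H(τ) → ∞; τ^{-δ}H(τ) → 0 for every δ > 0. Suppose additionally there exists a strictly increasing convex function Φ_α on [R, ∞) with Φ_α⁻¹(τ) = τ H(τ)^{-α} for all τ ∈ [Φ_α(R), ∞). Then Φ_α(τ) ≍ τ H(τ)^α as τ → ∞. -/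
theorem stmt_10 (R α : ℝ) (hR : 0 < R) (hα : 0 < α)
    (G H H' Φ : ℝ → ℝ)
    (hGpos : ∀ τ ∈ Set.Ici R, 0 < G τ) (hHpos : ∀ τ ∈ Set.Ici R, 0 < H τ)
    (hGcont : ContinuousOn G (Set.Ici R))
    (hHderiv : ∀ τ ∈ Set.Ici R, HasDerivAt H (H' τ) τ)
    (hH'cont : ContinuousOn H' (Set.Ici R))
    (ha : ∀ a : ℝ, 1 ≤ a → ∀ b : ℝ, 0 < b → Asymp (fun τ => G (a * τ ^ b)) G)
    (hb : Asymp H' (fun τ => τ⁻¹ * G τ))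
    (hb' : ∃ M : ℝ, ∀ τ : ℝ, M ≤ τ → 0 < H' τ)
    (hc : Filter.Tendsto H Filter.atTop Filter.atTop)
    (hd : ∀ δ : ℝ, 0 < δ →
      Filter.Tendsto (fun τ : ℝ => τ ^ (-δ) * H τ) Filter.atTop (nhds 0))
    (hΦmono : StrictMonoOn Φ (Set.Ici R))
    (hΦconv : ConvexOn ℝ (Set.Ici R) Φ)
    (hΦinv : ∀ τ ∈ Set.Ici (Φ R), τ * H τ ^ (-α) ∈ Set.Ici R ∧ Φ (τ * H τ ^ (-α)) = τ) :
    Asymp Φ (fun τ => τ * H τ ^ α) := by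
  obtain ⟨Cb, hCb, Mb, hbs⟩ := hb
  obtain ⟨Ca, hCa, Ma, has⟩ := ha 1 le_rfl 2 two_pos
  obtain ⟨Mb', hb's⟩ := hb'
  have hδ : (0:ℝ) < 1/(2*α) := by positivity
  obtain ⟨Md, hMd⟩ := Filter.eventually_atTop.mp
    ((hd _ hδ).eventually_lt_const one_pos)
  obtain ⟨Mc, hMc⟩ := Filter.eventually_atTop.mp (hc.eventually_ge_atTop 1)
  -- grand threshold
  set A : ℝ := max (max 1 R) (max (max |Mb| Ma) Mb') with hA
  have hA1 : (1:ℝ) ≤ A := le_trans (le_max_left 1 R) (le_max_left _ _)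
  have hAR : R ≤ A := le_trans (le_max_right 1 R) (le_max_left _ _)
  have hAMb : |Mb| ≤ A := le_trans (le_max_left _ Ma) (le_trans (le_max_left _ Mb') (le_max_right _ _))
  have hAMa : Ma ≤ A := le_trans (le_max_right |Mb| Ma) (le_trans (le_max_left _ Mb') (le_max_right _ _))
  have hAMb' : Mb' ≤ A := le_trans (le_max_right _ Mb') (le_max_right _ _)
  have hA0 : (0:ℝ) < A := lt_of_lt_of_le one_pos hA1
  -- facts for u ≥ A
  have husq : ∀ u : ℝ, A ≤ u → u ≤ u ^ 2 := fun u hu =>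
    le_self_pow₀ (le_trans hA1 hu) two_ne_zero
  have huR : ∀ u : ℝ, A ≤ u → R ≤ u := fun u hu => le_trans hAR hu
  have hu2R : ∀ u : ℝ, A ≤ u → R ≤ u ^ 2 := fun u hu =>
    le_trans (huR u hu) (husq u hu)
  -- monotonicity of H on [A, ∞)
  have hHmono : MonotoneOn H (Set.Ici A) := by
    apply monotoneOn_of_deriv_nonneg (convex_Ici A)
    · intro x hx
      exact (hHderiv x (huR x hx)).continuousAt.continuousWithinAt
    · intro x hx
      rw [interior_Ici] at hx
      exact (hHderiv x (huR x hx.le)).differentiableAt.differentiableWithinAt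
    · intro x hx
      rw [interior_Ici] at hx
      rw [(hHderiv x (huR x hx.le)).deriv]
      exact (hb's x (le_trans hAMb' hx.le)).le
  -- the comparison function F
  set c : ℝ := 2 * Cb * Ca * Cb with hc_def
  have hc0 : 0 < c := by positivity
  set F : ℝ → ℝ := fun u => c * H u - H (u ^ 2) with hF
  have hFderiv : ∀ u : ℝ, A ≤ u →
      HasDerivAt F (c * H' u - H' (u ^ 2) * (2 * u)) u := by
    intro u hu
    have h1 : HasDerivAt (fun x : ℝ => H (x ^ 2)) (H' (u ^ 2) * (2 * u)) u := by
      have hf : HasDerivAt (fun x : ℝ => x ^ 2) (2 * u) u := by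
        simpa using hasDerivAt_pow 2 u
      have := HasDerivAt.comp (h₂ := H) (h := fun x : ℝ => x ^ 2)
        (h₂' := H' (u ^ 2)) (h' := 2 * u) u (hHderiv (u ^ 2) (hu2R u hu)) hf
      exact this
    exact ((hHderiv u (huR u hu)).const_mul c).sub h1
  have hkey : ∀ u : ℝ, A ≤ u → 0 ≤ c * H' u - H' (u ^ 2) * (2 * u) := by
    intro u hu
    have hu0 : (0:ℝ) < u := lt_of_lt_of_le hA0 hu
    have huMb : Mb ≤ u := le_trans (le_trans (le_abs_self Mb) hAMb) hu
    have hu2Mb : Mb ≤ u ^ 2 := le_trans huMb (husq u hu)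
    have f1 : H' (u ^ 2) ≤ Cb * ((u ^ 2)⁻¹ * G (u ^ 2)) := (hbs (u ^ 2) hu2Mb).2
    have f2 : G (u ^ 2) ≤ Ca * G u := by
      have h := (has u (le_trans hAMa hu)).2
      simp only [one_mul, Real.rpow_two] at h
      exact h
    have f3 : u⁻¹ * G u ≤ Cb * H' u := by
      have h := (hbs u huMb).1
      rwa [inv_mul_le_iff₀ hCb] at h
    have hGu2 : 0 ≤ G (u ^ 2) := (hGpos _ (hu2R u hu)).le
    have hGu : 0 ≤ G u := (hGpos _ (huR u hu)).le
    have hchain : H' (u ^ 2) * (2 * u) ≤ c * H' u := by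
      calc H' (u ^ 2) * (2 * u)
          ≤ (Cb * ((u ^ 2)⁻¹ * G (u ^ 2))) * (2 * u) := by
            apply mul_le_mul_of_nonneg_right f1 (by positivity)
        _ = 2 * Cb * (G (u ^ 2) * u⁻¹) := by
            field_simp
        _ ≤ 2 * Cb * ((Ca * G u) * u⁻¹) := by
            apply mul_le_mul_of_nonneg_left
              (mul_le_mul_of_nonneg_right f2 (by positivity)) (by positivity)
        _ = 2 * Cb * Ca * (u⁻¹ * G u) := by ring
        _ ≤ 2 * Cb * Ca * (Cb * H' u) := by
            apply mul_le_mul_of_nonneg_left f3 (by positivity)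
        _ = c * H' u := by rw [hc_def]; ring
    linarith
  have hFmono : MonotoneOn F (Set.Ici A) := by
    apply monotoneOn_of_deriv_nonneg (convex_Ici A)
    · intro x hx
      exact (hFderiv x hx).continuousAt.continuousWithinAt
    · intro x hx
      rw [interior_Ici] at hx
      exact (hFderiv x hx.le).differentiableAt.differentiableWithinAt
    · intro x hx
      rw [interior_Ici] at hx
      rw [(hFderiv x hx.le).deriv]
      exact hkey x hx.le
  -- doubling-type bound for H
  set D : ℝ := c + H (A ^ 2) with hD
  have hHA2 : 0 < H (A ^ 2) := hHpos _ (hu2R A le_rfl)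
  have hHA : 0 < H A := hHpos _ (huR A le_rfl)
  have hD0 : 0 < D := by positivity
  have hHsq : ∀ τ : ℝ, A ≤ τ → 1 ≤ H τ → H (τ ^ 2) ≤ D * H τ := by
    intro τ hτ h1
    have hFA := hFmono (Set.self_mem_Ici) (Set.mem_Ici.mpr hτ) hτ
    simp only [hF] at hFA
    have h2 : H (A ^ 2) * 1 ≤ H (A ^ 2) * H τ :=
      mul_le_mul_of_nonneg_left h1 hHA2.le
    have h3 : 0 ≤ c * H A := by positivity
    have expand : D * H τ = c * H τ + H (A ^ 2) * H τ := by rw [hD]; ring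
    linarith
  -- Φ σ ≥ σ for large σ
  set T0 : ℝ := max (max A (Φ R)) Mc with hT0
  have hΦge : ∀ σ : ℝ, T0 ≤ σ → σ ≤ Φ σ := by
    intro σ hσ
    have hσA : A ≤ σ := le_trans (le_trans (le_max_left A (Φ R)) (le_max_left _ Mc)) hσ
    have hσR : R ≤ σ := huR σ hσA
    have hσΦR : Φ R ≤ σ := le_trans (le_trans (le_max_right A (Φ R)) (le_max_left _ Mc)) hσ
    have h1 : 1 ≤ H σ := hMc σ (le_trans (le_max_right _ Mc) hσ)
    obtain ⟨hmem, heq⟩ := hΦinv σ hσΦR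
    have hle : σ * H σ ^ (-α) ≤ σ := by
      have h2 : H σ ^ (-α) ≤ 1 :=
        Real.rpow_le_one_of_one_le_of_nonpos h1 (neg_nonpos.mpr hα.le)
      have hσ0 : 0 ≤ σ := le_trans hR.le hσR
      exact mul_le_of_le_one_right hσ0 h2
    calc σ = Φ (σ * H σ ^ (-α)) := heq.symm
      _ ≤ Φ σ := hΦmono.monotoneOn hmem (Set.mem_Ici.mpr hσR) hle
  -- fixed point identity
  have hfix : ∀ τ : ℝ, T0 ≤ τ → Φ τ = τ * H (Φ τ) ^ α := by
    intro τ hτ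
    have hτΦ : τ ≤ Φ τ := hΦge τ hτ
    have hτA : A ≤ τ := le_trans (le_trans (le_max_left A (Φ R)) (le_max_left _ Mc)) hτ
    have hτR : R ≤ τ := huR τ hτA
    have hΦτR : R ≤ Φ τ := le_trans hτR hτΦ
    have hΦτΦR : Φ R ≤ Φ τ :=
      hΦmono.monotoneOn Set.self_mem_Ici (Set.mem_Ici.mpr hτR) hτR
    obtain ⟨hmem, heq⟩ := hΦinv (Φ τ) hΦτΦR
    have hinj : Φ τ * H (Φ τ) ^ (-α) = τ :=
      hΦmono.injOn hmem (Set.mem_Ici.mpr hτR) heq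
    have hHp : 0 < H (Φ τ) := hHpos _ hΦτR
    have h2 : (Φ τ * H (Φ τ) ^ (-α)) * H (Φ τ) ^ α = Φ τ := by
      rw [mul_assoc, ← Real.rpow_add hHp]
      norm_num
    calc Φ τ = (Φ τ * H (Φ τ) ^ (-α)) * H (Φ τ) ^ α := h2.symm
      _ = τ * H (Φ τ) ^ α := by rw [hinj]
  -- upper bound Φ τ ≤ τ^2
  set T1 : ℝ := max T0 Md with hT1
  have hΦub : ∀ τ : ℝ, T1 ≤ τ → Φ τ ≤ τ ^ 2 := by
    intro τ hτ
    have hτT0 : T0 ≤ τ := le_trans (le_max_left T0 Md) hτ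
    have hτΦ : τ ≤ Φ τ := hΦge τ hτT0
    have hτA : A ≤ τ := le_trans (le_trans (le_max_left A (Φ R)) (le_max_left _ Mc)) hτT0
    have hτ0 : (0:ℝ) < τ := lt_of_lt_of_le hA0 hτA
    have hΦpos : 0 < Φ τ := lt_of_lt_of_le hτ0 hτΦ
    have hΦMd : Md ≤ Φ τ := le_trans (le_trans (le_max_right T0 Md) hτ) hτΦ
    have hHp : 0 ≤ H (Φ τ) := (hHpos _ (le_trans (huR τ hτA) hτΦ)).le
    have hH : H (Φ τ) ≤ Φ τ ^ (1/(2*α)) := by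
      have h := hMd (Φ τ) hΦMd
      rw [Real.rpow_neg hΦpos.le, inv_mul_lt_iff₀ (Real.rpow_pos_of_pos hΦpos _)] at h
      linarith [h]
    have hmain : Φ τ ≤ τ * Φ τ ^ (1/2 : ℝ) := by
      conv_lhs => rw [hfix τ hτT0]
      apply mul_le_mul_of_nonneg_left _ hτ0.le
      calc H (Φ τ) ^ α ≤ (Φ τ ^ (1/(2*α))) ^ α :=
            Real.rpow_le_rpow hHp hH hα.le
        _ = Φ τ ^ (1/2 : ℝ) := by
            rw [← Real.rpow_mul hΦpos.le]
            congr 1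
            field_simp
    have hhalf0 : 0 < Φ τ ^ (1/2 : ℝ) := Real.rpow_pos_of_pos hΦpos _
    have hsplit : Φ τ = Φ τ ^ (1/2 : ℝ) * Φ τ ^ (1/2 : ℝ) := by
      rw [← Real.rpow_add hΦpos]
      norm_num
    have hhalf : Φ τ ^ (1/2 : ℝ) ≤ τ :=
      le_of_mul_le_mul_right (by rw [← hsplit]; exact hmain) hhalf0
    calc Φ τ ≤ τ * Φ τ ^ (1/2 : ℝ) := hmain
      _ ≤ τ * τ := mul_le_mul_of_nonneg_left hhalf hτ0.le
      _ = τ ^ 2 := by ring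
  -- final combination
  set D' : ℝ := max D 1 with hD'
  have hD'1 : (1:ℝ) ≤ D' := le_max_right D 1
  have hD'0 : (0:ℝ) < D' := lt_of_lt_of_le one_pos hD'1
  refine ⟨D' ^ α, Real.rpow_pos_of_pos hD'0 α, max T1 1, fun τ hτ => ?_⟩
  have hτT1 : T1 ≤ τ := le_trans (le_max_left T1 1) hτ
  have hτT0 : T0 ≤ τ := le_trans (le_max_left T0 Md) hτT1
  have hτA : A ≤ τ := le_trans (le_trans (le_max_left A (Φ R)) (le_max_left _ Mc)) hτT0
  have hτR : R ≤ τ := huR τ hτA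
  have hτ0 : (0:ℝ) < τ := lt_of_lt_of_le hA0 hτA
  have hτΦ : τ ≤ Φ τ := hΦge τ hτT0
  have hΦτub : Φ τ ≤ τ ^ 2 := hΦub τ hτT1
  have h1 : 1 ≤ H τ := hMc τ (le_trans (le_max_right _ Mc) hτT0)
  have hHτ0 : 0 < H τ := lt_of_lt_of_le one_pos h1
  have hmem1 : τ ∈ Set.Ici A := Set.mem_Ici.mpr hτA
  have hmem2 : Φ τ ∈ Set.Ici A := Set.mem_Ici.mpr (le_trans hτA hτΦ)
  have hmem3 : τ ^ 2 ∈ Set.Ici A := Set.mem_Ici.mpr (le_trans hτA (husq τ hτA))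
  have hlow : H τ ≤ H (Φ τ) := hHmono hmem1 hmem2 hτΦ
  have hhigh : H (Φ τ) ≤ D' * H τ := by
    calc H (Φ τ) ≤ H (τ ^ 2) := hHmono hmem2 hmem3 hΦτub
      _ ≤ D * H τ := hHsq τ hτA h1
      _ ≤ D' * H τ := mul_le_mul_of_nonneg_right (le_max_left D 1) hHτ0.le
  have hfixτ : Φ τ = τ * H (Φ τ) ^ α := hfix τ hτT0
  have hHΦ0 : 0 ≤ H (Φ τ) := le_trans hHτ0.le hlow
  constructor
  · -- lower bound
    have hrle : τ * H τ ^ α ≤ Φ τ := by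
      rw [hfixτ]
      exact mul_le_mul_of_nonneg_left
        (Real.rpow_le_rpow hHτ0.le hlow hα.le) hτ0.le
    have hC1 : (1:ℝ) ≤ D' ^ α := Real.one_le_rpow hD'1 hα.le
    have hX0 : 0 ≤ τ * H τ ^ α := by positivity
    calc (D' ^ α)⁻¹ * (τ * H τ ^ α) ≤ 1 * (τ * H τ ^ α) :=
          mul_le_mul_of_nonneg_right (inv_le_one_of_one_le₀ hC1) hX0
      _ = τ * H τ ^ α := one_mul _
      _ ≤ Φ τ := hrle
  · -- upper bound
    rw [hfixτ]
    calc τ * H (Φ τ) ^ α ≤ τ * (D' * H τ) ^ α :=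
          mul_le_mul_of_nonneg_left
            (Real.rpow_le_rpow hHΦ0 hhigh hα.le) hτ0.le
      _ = D' ^ α * (τ * H τ ^ α) := by
          rw [Real.mul_rpow hD'0.le hHτ0.le]
          ring
end

section
/- Let p > 1, δ ∈ (0,1), q ∈ ℝ, α ∈ (1, p), and let G be a positive continuous function on (R, ∞) (for some R ≥ 2) such that τ ↦ τ^{-δ} G(τ) is decreasing on (R, ∞). Then there exist C > 0 and T ∈ (0,1) such that for all t ∈ (0, T): ∫_0^t s^{-(p-α)/(p-1)} G(s⁻¹)^{(α-1)/(p-1)} ds ≤ C t^{(α-1)/(p-1)} G(t⁻¹)^{(α-1)/(p-1)}. -/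
open MeasureTheory Set Real

theorem stmt_13 (p δ q α R : ℝ) (hp : 1 < p) (hδ : 0 < δ) (hδ1 : δ < 1)
    (hα1 : 1 < α) (hαp : α < p) (hR : 2 ≤ R)
    (G : ℝ → ℝ) (hGpos : ∀ τ ∈ Set.Ioi R, 0 < G τ)
    (hGcont : ContinuousOn G (Set.Ioi R))
    (hdec : AntitoneOn (fun τ => τ ^ (-δ) * G τ) (Set.Ioi R)) :
    ∃ C : ℝ, 0 < C ∧ ∃ T : ℝ, 0 < T ∧ T < 1 ∧ ∀ t : ℝ, 0 < t → t < T →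
      (∫ s in (0:ℝ)..t, s ^ (-((p-α)/(p-1))) * G s⁻¹ ^ ((α-1)/(p-1))) ≤
        C * t ^ ((α-1)/(p-1)) * G t⁻¹ ^ ((α-1)/(p-1)) := by
  have hp1 : (0:ℝ) < p - 1 := by linarith
  set γ := (α-1)/(p-1) with hγdef
  set β := (p-α)/(p-1) with hβdef
  have hγ : 0 < γ := div_pos (by linarith) hp1
  have hβ : 0 < β := div_pos (by linarith) hp1
  have hβγ : β + γ = 1 := by
    rw [hβdef, hγdef, ← add_div, show p - α + (α - 1) = p - 1 by ring,
      div_self hp1.ne']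
  set r : ℝ := -(β + δ*γ) with hrdef
  have hδγ : δ * γ < γ := by nlinarith
  have hr1 : -1 < r := by rw [hrdef]; nlinarith
  have hr1' : r + 1 = γ*(1-δ) := by rw [hrdef]; nlinarith
  have hr1pos : 0 < r + 1 := by rw [hr1']; exact mul_pos hγ (by linarith)
  have hR0 : (0:ℝ) < R := by linarith
  have h1δ : 0 < 1 - δ := by linarith
  refine ⟨(γ*(1-δ))⁻¹, inv_pos.mpr (mul_pos hγ h1δ), R⁻¹, inv_pos.mpr hR0, ?_, ?_⟩
  · rw [inv_lt_one_iff₀]; right; linarith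
  intro t ht htT
  have htR : R < t⁻¹ := by
    have := (inv_lt_inv₀ (by positivity) ht).mpr htT
    rwa [inv_inv] at this
  have hGt : 0 < G t⁻¹ := hGpos _ htR
  set K : ℝ := t ^ (δ*γ) * G t⁻¹ ^ γ with hKdef
  have hK : 0 < K := by positivity
  have hrneg : r < 0 := by rw [hrdef]; nlinarith
  have key : ∀ x : ℝ, 0 < x → (x⁻¹) ^ (-δ) = x ^ δ := fun x hx => by
    rw [Real.inv_rpow hx.le, Real.rpow_neg hx.le, inv_inv]
  -- pointwise bound on Icc 0 t
  have hbound : ∀ s ∈ Icc (0:ℝ) t, s ^ (-β) * G s⁻¹ ^ γ ≤ K * s ^ r := by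
    intro s hs
    rcases eq_or_lt_of_le hs.1 with h0 | hs0
    · rw [← h0, Real.zero_rpow (neg_ne_zero.mpr hβ.ne'), zero_mul,
        Real.zero_rpow hrneg.ne]
      simp
    · have hsR : R < s⁻¹ := lt_of_lt_of_le htR (by
        exact inv_anti₀ hs0 hs.2)
      have hle : t⁻¹ ≤ s⁻¹ := inv_anti₀ hs0 hs.2
      have hmono := hdec (mem_Ioi.mpr htR) (mem_Ioi.mpr hsR) hle
      simp only at hmono
      rw [key _ hs0, key _ ht] at hmono
      -- hmono : s ^ δ * G s⁻¹ ≤ t ^ δ * G t⁻¹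
      have hsδ : (0:ℝ) < s ^ δ := Real.rpow_pos_of_pos hs0 δ
      have hG : G s⁻¹ ≤ s ^ (-δ) * (t ^ δ * G t⁻¹) := by
        rw [Real.rpow_neg hs0.le]
        rw [← le_div_iff₀' hsδ] at hmono
        rwa [div_eq_inv_mul] at hmono
      have hGγ : G s⁻¹ ^ γ ≤ (s ^ (-δ) * (t ^ δ * G t⁻¹)) ^ γ :=
        Real.rpow_le_rpow (hGpos _ hsR).le hG hγ.le
      calc s ^ (-β) * G s⁻¹ ^ γ
          ≤ s ^ (-β) * (s ^ (-δ) * (t ^ δ * G t⁻¹)) ^ γ := by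
            exact mul_le_mul_of_nonneg_left hGγ (Real.rpow_nonneg hs0.le _)
        _ = K * s ^ r := by
            rw [Real.mul_rpow (by positivity) (by positivity),
              Real.mul_rpow (by positivity) hGt.le,
              ← Real.rpow_mul hs0.le, ← Real.rpow_mul ht.le,
              show r = -β + (-δ*γ) by rw [hrdef]; ring,
              Real.rpow_add hs0, hKdef, show δ*γ = δ*γ by rfl]
            ring
  -- integrability
  have hg_int : IntervalIntegrable (fun s => K * s ^ r) volume 0 t :=
    (intervalIntegral.intervalIntegrable_rpow' hr1).const_mul K
  have hf_cont : ContinuousOn (fun s : ℝ => s ^ (-β) * G s⁻¹ ^ γ) (Ioc 0 t) := by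
    apply ContinuousOn.mul
    · exact ContinuousOn.rpow_const continuousOn_id
        (fun x hx => Or.inl (ne_of_gt hx.1))
    · apply ContinuousOn.rpow_const
      · apply hGcont.comp (continuousOn_inv₀.mono ?_) ?_
        · intro x hx; exact ne_of_gt hx.1
        · intro x hx
          exact mem_Ioi.mpr (lt_of_lt_of_le htR (inv_anti₀ hx.1 hx.2))
      · intro x hx
        exact Or.inl (ne_of_gt (hGpos _ (mem_Ioi.mpr
          (lt_of_lt_of_le htR (inv_anti₀ hx.1 hx.2)))))
  have hf_int : IntervalIntegrable (fun s : ℝ => s ^ (-β) * G s⁻¹ ^ γ) volume 0 t := by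
    rw [intervalIntegrable_iff_integrableOn_Ioc_of_le ht.le]
    apply MeasureTheory.Integrable.mono'
      ((intervalIntegrable_iff_integrableOn_Ioc_of_le ht.le).mp hg_int)
      (hf_cont.aestronglyMeasurable measurableSet_Ioc)
    · rw [ae_restrict_iff' measurableSet_Ioc]
      filter_upwards with s hs
      have h1 : 0 ≤ s ^ (-β) * G s⁻¹ ^ γ := by
        apply mul_nonneg (Real.rpow_nonneg hs.1.le _)
        exact Real.rpow_nonneg (hGpos _ (mem_Ioi.mpr
          (lt_of_lt_of_le htR (inv_anti₀ hs.1 hs.2)))).le _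
      rw [Real.norm_eq_abs, abs_of_nonneg h1]
      exact hbound s ⟨hs.1.le, hs.2⟩
  -- compare
  have hcomp := intervalIntegral.integral_mono_on ht.le hf_int hg_int hbound
  have heval : (∫ s in (0:ℝ)..t, K * s ^ r) = K * (t ^ (r+1) / (r+1)) := by
    rw [intervalIntegral.integral_const_mul,
      integral_rpow (Or.inl hr1),
      Real.zero_rpow hr1pos.ne', sub_zero]
  refine hcomp.trans ?_
  rw [heval]
  have : K * (t ^ (r+1) / (r+1)) = (γ*(1-δ))⁻¹ * t ^ γ * G t⁻¹ ^ γ := by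
    rw [hr1', hKdef, show γ = δ*γ + γ*(1-δ) by ring, Real.rpow_add ht]
    field_simp
    ring
  rw [this]
end
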